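/- In a path category, let f be a fibration of n-types (n ≥ −2). Then: (1) any fibration g obtained by pulling back f along some map is a fibration of n-types; (2) if w is an equivalence and g is a fibration with f ≃ gw or fw ≃ g, then g is a fibration of n-types; (3) if w is an equivalence and g is a fibration with f ≃ wg or wf ≃ g, then g is a fibration of n-types. -/

import Mathlib

namespace EffPaper

open CategoryTheory

universe v u

/-! ### Path categories (Van den Berg–Moerdijk style), abstractly.

A `PathStruct` on a category is a pair of classes of maps: fibrations and equivalences.
`IsPathCategory` expresses the seven axioms of a path category. -/

structure PathStruct (C : Type u) [Category.{v} C] where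
  Fib : ∀ ⦃X Y : C⦄, (X ⟶ Y) → Prop
  Eqv : ∀ ⦃X Y : C⦄, (X ⟶ Y) → Prop

section PathCatDefs

variable {C : Type u} [Category.{v} C]

/-- `T` is a terminal object. -/
def IsTerminalObj (T : C) : Prop := ∀ Z : C, ∃ f : Z ⟶ T, ∀ g : Z ⟶ T, g = f

/-- The square with projections `p₁, p₂` is a pullback of the cospan `f, g`. -/
def IsPB {P X Y Z : C} (p₁ : P ⟶ X) (p₂ : P ⟶ Y) (f : X ⟶ Z) (g : Y ⟶ Z) : Prop :=
  p₁ ≫ f = p₂ ≫ g ∧ ∀ (Q : C) (q₁ : Q ⟶ X) (q₂ : Q ⟶ Y), q₁ ≫ f = q₂ ≫ g →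
    ∃! h : Q ⟶ P, h ≫ p₁ = q₁ ∧ h ≫ p₂ = q₂

/-- `p₁, p₂` exhibit their common domain as a binary product of `X` and `Y`. -/
def IsBinProd {P X Y : C} (p₁ : P ⟶ X) (p₂ : P ⟶ Y) : Prop :=
  ∀ (Q : C) (q₁ : Q ⟶ X) (q₂ : Q ⟶ Y), ∃! h : Q ⟶ P, h ≫ p₁ = q₁ ∧ h ≫ p₂ = q₂

variable (S : PathStruct C)

/-- `X → PX → X × X` is a path object for `X`: the first map is an equivalence, the
second (the pairing of `s` and `t` into a binary product `X × X`) is a fibration,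
and the composite is the diagonal. -/
def IsPathObj {X PX : C} (r : X ⟶ PX) (s t : PX ⟶ X) : Prop :=
  S.Eqv r ∧ r ≫ s = 𝟙 X ∧ r ≫ t = 𝟙 X ∧
  ∃ (W : C) (π₁ π₂ : W ⟶ X) (h : PX ⟶ W),
    IsBinProd π₁ π₂ ∧ h ≫ π₁ = s ∧ h ≫ π₂ = t ∧ S.Fib h

/-- A path object for `p : X ⟶ I` in the slice path category `C(I)`:
a factorisation of the fibrewise diagonal `X ⟶ X ×_I X` as an equivalence `r`
followed by a fibration. -/
def IsRelPathObj {X I PX : C} (p : X ⟶ I) (r : X ⟶ PX) (s t : PX ⟶ X) : Prop :=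
  S.Eqv r ∧ r ≫ s = 𝟙 X ∧ r ≫ t = 𝟙 X ∧ s ≫ p = t ≫ p ∧
  ∃ (W : C) (π₁ π₂ : W ⟶ X) (h : PX ⟶ W),
    IsPB π₁ π₂ p p ∧ h ≫ π₁ = s ∧ h ≫ π₂ = t ∧ S.Fib h

/-- The seven axioms for a path category. -/
structure IsPathCategory : Prop where
  fib_of_iso : ∀ {X Y : C} (f : X ⟶ Y), IsIso f → S.Fib f
  fib_comp : ∀ {X Y Z : C} (f : X ⟶ Y) (g : Y ⟶ Z), S.Fib f → S.Fib g → S.Fib (f ≫ g)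
  terminal : ∃ T : C, IsTerminalObj T ∧ ∀ (X : C) (f : X ⟶ T), S.Fib f
  pullback : ∀ {X Y Z : C} (f : X ⟶ Z) (g : Y ⟶ Z), S.Fib f →
    ∃ (P : C) (p₁ : P ⟶ X) (p₂ : P ⟶ Y), IsPB p₁ p₂ f g ∧ S.Fib p₂
  eqv_of_iso : ∀ {X Y : C} (f : X ⟶ Y), IsIso f → S.Eqv f
  two_out_of_six : ∀ {X Y Z W : C} (f : X ⟶ Y) (g : Y ⟶ Z) (h : Z ⟶ W),
    S.Eqv (f ≫ g) → S.Eqv (g ≫ h) →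
    S.Eqv f ∧ S.Eqv g ∧ S.Eqv h ∧ S.Eqv (f ≫ g ≫ h)
  path_obj : ∀ X : C, ∃ (PX : C) (r : X ⟶ PX) (s t : PX ⟶ X), IsPathObj S r s t
  triv_fib_pb : ∀ {X Y Z P : C} (f : X ⟶ Z) (g : Y ⟶ Z) (p₁ : P ⟶ X) (p₂ : P ⟶ Y),
    S.Fib f → S.Eqv f → IsPB p₁ p₂ f g → S.Fib p₂ ∧ S.Eqv p₂
  triv_fib_sect : ∀ {X Y : C} (f : X ⟶ Y), S.Fib f → S.Eqv f → ∃ s : Y ⟶ X, s ≫ f = 𝟙 Y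

/-- Two parallel maps are homotopic: `(f,g)` factors through some path object. -/
def Homotopic {Z X : C} (f g : Z ⟶ X) : Prop :=
  ∃ (PX : C) (r : X ⟶ PX) (s t : PX ⟶ X), IsPathObj S r s t ∧
    ∃ H : Z ⟶ PX, H ≫ s = f ∧ H ≫ t = g

/-- `f` and `g` are fibrewise homotopic over the codomain of `p`:
`(f,g)` factors through some path object of `p` in the slice. -/
def FibHomotopic {Z X I : C} (p : X ⟶ I) (f g : Z ⟶ X) : Prop :=
  ∃ (PX : C) (r : X ⟶ PX) (s t : PX ⟶ X), IsRelPathObj S p r s t ∧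
    ∃ H : Z ⟶ PX, H ≫ s = f ∧ H ≫ t = g

/-- `IsNTypeFib S n f` says that `f` is a fibration of `(n-2)`-types; so `n = 0`
corresponds to hlevel `-2` (trivial fibrations), `n = 1` to propositions,
`n = 2` to sets and `n = 3` to groupoids. -/
def IsNTypeFib : ℕ → ∀ ⦃Y X : C⦄, (Y ⟶ X) → Prop
  | 0, _, _, f => S.Fib f ∧ S.Eqv f
  | n+1, Y, _, f => S.Fib f ∧ ∃ (PY W : C) (r : Y ⟶ PY) (s t : PY ⟶ Y)
      (π₁ π₂ : W ⟶ Y) (h : PY ⟶ W),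
      IsRelPathObj S f r s t ∧ IsPB π₁ π₂ f f ∧ h ≫ π₁ = s ∧ h ≫ π₂ = t ∧
      IsNTypeFib n h

/-- The (strictly) commutative square with vertical fibrations `g` (left) and `f` (right),
top `top` and bottom `bot`, is a homotopy pullback: the induced map to the actual
pullback is an equivalence. -/
def IsHomotopyPB {D Cc B A : C} (g : D ⟶ Cc) (top : D ⟶ B) (f : B ⟶ A) (bot : Cc ⟶ A) :
    Prop :=
  g ≫ bot = top ≫ f ∧ ∃ (P : C) (p₁ : P ⟶ Cc) (p₂ : P ⟶ B) (h : D ⟶ P),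
    IsPB p₁ p₂ bot f ∧ h ≫ p₁ = g ∧ h ≫ p₂ = top ∧ S.Eqv h

/-- A transport structure on the fibration `p : Y ⟶ X`, relative to the path object
`(PX, r, s, t)` and the pullback `(Q, q₁, q₂)` of `s : PX ⟶ X` along `p`:
a map `Γ : Y ×_X PX ⟶ Y` with `p ∘ Γ = t ∘ q₂` and `Γ ∘ (1_Y, r ∘ p) ≃_X 1_Y`. -/
def IsTransport {Y X PX Q : C} (p : Y ⟶ X) (r : X ⟶ PX) (s t : PX ⟶ X)
    (q₁ : Q ⟶ Y) (q₂ : Q ⟶ PX) (Γ : Q ⟶ Y) : Prop :=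
  Γ ≫ p = q₂ ≫ t ∧
  ∀ j : Y ⟶ Q, j ≫ q₁ = 𝟙 Y → j ≫ q₂ = p ≫ r → FibHomotopic S p (j ≫ Γ) (𝟙 Y)

/-- A fibration `p : Y ⟶ X` is univalent: whenever `f, g : Z ⟶ X` and
`w : f*p ⟶ g*p` is an equivalence over `Z`, there is a homotopy `H` from `f` to `g`
such that `w` is fibrewise homotopic over `Z` to the map induced by `H` and a
transport structure on `p`. -/
def Univalent {Y X : C} (p : Y ⟶ X) : Prop :=
  ∀ {Z Zf Zg : C} (f g : Z ⟶ X) (a₁ : Zf ⟶ Z) (a₂ : Zf ⟶ Y) (b₁ : Zg ⟶ Z) (b₂ : Zg ⟶ Y),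
    IsPB a₁ a₂ f p → IsPB b₁ b₂ g p →
    ∀ w : Zf ⟶ Zg, w ≫ b₁ = a₁ → S.Eqv w →
    ∃ (PX Q : C) (r : X ⟶ PX) (s t : PX ⟶ X) (q₁ : Q ⟶ Y) (q₂ : Q ⟶ PX) (Γ : Q ⟶ Y)
      (H : Z ⟶ PX) (k : Zf ⟶ Q) (w' : Zf ⟶ Zg),
      IsPathObj S r s t ∧ IsPB q₁ q₂ p s ∧ IsTransport S p r s t q₁ q₂ Γ ∧
      H ≫ s = f ∧ H ≫ t = g ∧
      k ≫ q₁ = a₂ ∧ k ≫ q₂ = a₁ ≫ H ∧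
      w' ≫ b₁ = a₁ ∧ w' ≫ b₂ = k ≫ Γ ∧
      FibHomotopic S b₁ w w'

/-- `π : E ⟶ U` is a representation for the class `Small`: it is small, and every
small fibration is a homotopy pullback of it. -/
def IsRepresentation (Small : ∀ ⦃X Y : C⦄, (X ⟶ Y) → Prop) {E U : C} (π : E ⟶ U) : Prop :=
  Small π ∧ ∀ ⦃B A : C⦄ (f : B ⟶ A), Small f →
    ∃ (c : A ⟶ U) (top : B ⟶ E), IsHomotopyPB S f top π c

/-- `M` is a good lift for the universal property of the homotopy Π-type
`(pE, u₁, u₂, ε)` of `g` along `f`, at the map `h : A ⟶ X` with chosen pullback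
`(Ah, v₁, v₂)` of `h` along `f` and `m : f*h ⟶ g` over `Y`. -/
def HPiLiftGood {Y X Z E F A Ah : C} (f : Y ⟶ X) (g : Z ⟶ Y) (pE : E ⟶ X)
    (u₁ : F ⟶ E) (u₂ : F ⟶ Y) (ε : F ⟶ Z)
    (h : A ⟶ X) (v₁ : Ah ⟶ A) (v₂ : Ah ⟶ Y) (m : Ah ⟶ Z) (M : A ⟶ E) : Prop :=
  M ≫ pE = h ∧ ∀ fM : Ah ⟶ F, fM ≫ u₁ = v₁ ≫ M → fM ≫ u₂ = v₂ →
    FibHomotopic S g (fM ≫ ε) m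

/-- `(pE, u₁, u₂, ε)` is a homotopy Π-type of the fibration `g : Z ⟶ Y` along the
fibration `f : Y ⟶ X`.  Here `pE : E ⟶ X` is the Π-fibration, `(F, u₁, u₂)` is a
pullback of `pE` along `f`, and `ε : f*pE ⟶ g` is the counit (a map over `Y`). -/
structure IsHPi {Y X Z E F : C} (f : Y ⟶ X) (g : Z ⟶ Y) (pE : E ⟶ X)
    (u₁ : F ⟶ E) (u₂ : F ⟶ Y) (ε : F ⟶ Z) : Prop where
  fib : S.Fib pE
  pb : IsPB u₁ u₂ pE f
  over' : ε ≫ g = u₂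
  lift : ∀ {A Ah : C} (h : A ⟶ X) (v₁ : Ah ⟶ A) (v₂ : Ah ⟶ Y), IsPB v₁ v₂ h f →
    ∀ m : Ah ⟶ Z, m ≫ g = v₂ →
      ∃ M : A ⟶ E, HPiLiftGood S f g pE u₁ u₂ ε h v₁ v₂ m M
  unique : ∀ {A Ah : C} (h : A ⟶ X) (v₁ : Ah ⟶ A) (v₂ : Ah ⟶ Y), IsPB v₁ v₂ h f →
    ∀ m : Ah ⟶ Z, m ≫ g = v₂ → ∀ M M' : A ⟶ E,
      HPiLiftGood S f g pE u₁ u₂ ε h v₁ v₂ m M →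
      HPiLiftGood S f g pE u₁ u₂ ε h v₁ v₂ m M' →
      FibHomotopic S pE M M'

/-- The path category has homotopy Π-types. -/
def HasHPi : Prop := ∀ ⦃Y X Z : C⦄ (f : Y ⟶ X) (g : Z ⟶ Y), S.Fib f → S.Fib g →
  ∃ (E F : C) (pE : E ⟶ X) (u₁ : F ⟶ E) (u₂ : F ⟶ Y) (ε : F ⟶ Z),
    IsHPi S f g pE u₁ u₂ ε

/-- A class of small fibrations: contained in the fibrations, containing all
isomorphisms, closed under composition and stable under homotopy pullback. -/
def IsSmallClass (Small : ∀ ⦃X Y : C⦄, (X ⟶ Y) → Prop) : Prop :=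
  (∀ ⦃X Y : C⦄ (f : X ⟶ Y), Small f → S.Fib f) ∧
  (∀ ⦃X Y : C⦄ (f : X ⟶ Y), IsIso f → Small f) ∧
  (∀ ⦃X Y Z : C⦄ (f : X ⟶ Y) (g : Y ⟶ Z), Small f → Small g → Small (f ≫ g)) ∧
  (∀ ⦃D Cc B A : C⦄ (g : D ⟶ Cc) (top : D ⟶ B) (f : B ⟶ A) (bot : Cc ⟶ A),
    S.Fib g → S.Fib f → Small f → IsHomotopyPB S g top f bot → Small g)

/-- The class `Small` is closed under homotopy Π-types along arbitrary fibrations: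
it is impredicative (polymorphic). -/
def ClosedUnderHPi (Small : ∀ ⦃X Y : C⦄, (X ⟶ Y) → Prop) : Prop :=
  ∀ ⦃Y X Z : C⦄ (f : Y ⟶ X) (g : Z ⟶ Y), S.Fib f → Small g →
    ∀ ⦃E F : C⦄ (pE : E ⟶ X) (u₁ : F ⟶ E) (u₂ : F ⟶ Y) (ε : F ⟶ Z),
      IsHPi S f g pE u₁ u₂ ε → Small pE

end PathCatDefs

end EffPaper
namespace EffPaper
open CategoryTheory



variable {C : Type u} [Category.{v} C] {S : PathStruct C}

/-! ### Pullback API -/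

theorem IsPB.w {P X Y Z : C} {p₁ : P ⟶ X} {p₂ : P ⟶ Y} {f : X ⟶ Z} {g : Y ⟶ Z}
    (h : IsPB p₁ p₂ f g) : p₁ ≫ f = p₂ ≫ g := h.1

noncomputable def IsPB.lift {P X Y Z Q : C} {p₁ : P ⟶ X} {p₂ : P ⟶ Y} {f : X ⟶ Z}
    {g : Y ⟶ Z} (h : IsPB p₁ p₂ f g) (q₁ : Q ⟶ X) (q₂ : Q ⟶ Y)
    (hw : q₁ ≫ f = q₂ ≫ g) : Q ⟶ P :=
  (h.2 Q q₁ q₂ hw).choose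

@[simp] theorem IsPB.lift_fst {P X Y Z Q : C} {p₁ : P ⟶ X} {p₂ : P ⟶ Y} {f : X ⟶ Z}
    {g : Y ⟶ Z} (h : IsPB p₁ p₂ f g) (q₁ : Q ⟶ X) (q₂ : Q ⟶ Y)
    (hw : q₁ ≫ f = q₂ ≫ g) : h.lift q₁ q₂ hw ≫ p₁ = q₁ :=
  (h.2 Q q₁ q₂ hw).choose_spec.1.1

@[simp] theorem IsPB.lift_snd {P X Y Z Q : C} {p₁ : P ⟶ X} {p₂ : P ⟶ Y} {f : X ⟶ Z}
    {g : Y ⟶ Z} (h : IsPB p₁ p₂ f g) (q₁ : Q ⟶ X) (q₂ : Q ⟶ Y)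
    (hw : q₁ ≫ f = q₂ ≫ g) : h.lift q₁ q₂ hw ≫ p₂ = q₂ :=
  (h.2 Q q₁ q₂ hw).choose_spec.1.2

theorem IsPB.hom_ext {P X Y Z Q : C} {p₁ : P ⟶ X} {p₂ : P ⟶ Y} {f : X ⟶ Z}
    {g : Y ⟶ Z} (h : IsPB p₁ p₂ f g) {a b : Q ⟶ P}
    (h1 : a ≫ p₁ = b ≫ p₁) (h2 : a ≫ p₂ = b ≫ p₂) : a = b := by
  obtain ⟨u, _, hu⟩ := h.2 Q (b ≫ p₁) (b ≫ p₂)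
    (by rw [Category.assoc, Category.assoc, h.1])
  rw [hu a ⟨h1, h2⟩, hu b ⟨rfl, rfl⟩]

theorem IsPB.symm {P X Y Z : C} {p₁ : P ⟶ X} {p₂ : P ⟶ Y} {f : X ⟶ Z} {g : Y ⟶ Z}
    (h : IsPB p₁ p₂ f g) : IsPB p₂ p₁ g f := by
  refine ⟨h.1.symm, fun Q q₁ q₂ hw => ?_⟩
  obtain ⟨u, ⟨hu1, hu2⟩, hu⟩ := h.2 Q q₂ q₁ hw.symm
  exact ⟨u, ⟨hu2, hu1⟩, fun y hy => hu y ⟨hy.2, hy.1⟩⟩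

/-- Pullback cancellation: if the right square and the outer rectangle are
pullbacks, then the left square is one. -/
theorem IsPB.cancel {O A P X Y Z : C} {p₁ : P ⟶ X} {p₂ : P ⟶ Y} {f : X ⟶ Z}
    {g : Y ⟶ Z} (hP : IsPB p₁ p₂ f g) {o₁ : O ⟶ A} {m : O ⟶ P} {e : A ⟶ X}
    (comm : o₁ ≫ e = m ≫ p₁)
    (houter : IsPB o₁ (m ≫ p₂) (e ≫ f) g) : IsPB o₁ m e p₁ := by
  refine ⟨comm, fun V v₁ v₂ hw => ?_⟩
  obtain ⟨u, ⟨hu1, hu2⟩, hu⟩ := houter.2 V v₁ (v₂ ≫ p₂)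
    (by rw [← Category.assoc, hw, Category.assoc, Category.assoc, hP.1])
  have hum : u ≫ m = v₂ := by
    refine hP.hom_ext ?_ ?_
    · rw [Category.assoc, ← comm, ← Category.assoc, hu1, hw]
    · rw [Category.assoc]; exact hu2
  refine ⟨u, ⟨hu1, hum⟩, fun y hy => hu y ⟨hy.1, by rw [← Category.assoc, hy.2]⟩⟩

/-! ### Equivalence algebra -/

theorem IsPathCategory.eqv_id (hS : IsPathCategory S) (X : C) : S.Eqv (𝟙 X) :=
  hS.eqv_of_iso _ (by infer_instance)

theorem IsPathCategory.fib_id (hS : IsPathCategory S) (X : C) : S.Fib (𝟙 X) :=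
  hS.fib_of_iso _ (by infer_instance)

theorem IsPathCategory.eqv_comp (hS : IsPathCategory S) {X Y Z : C} {f : X ⟶ Y}
    {g : Y ⟶ Z} (hf : S.Eqv f) (hg : S.Eqv g) : S.Eqv (f ≫ g) := by
  have := (hS.two_out_of_six f (𝟙 _) g (by rwa [Category.comp_id])
    (by rwa [Category.id_comp])).2.2.2
  simpa using this

theorem IsPathCategory.eqv_cancel_left (hS : IsPathCategory S) {X Y Z : C}
    {f : X ⟶ Y} {g : Y ⟶ Z} (hf : S.Eqv f) (hfg : S.Eqv (f ≫ g)) : S.Eqv g :=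
  (hS.two_out_of_six (𝟙 _) f g (by rwa [Category.id_comp]) hfg).2.2.1

theorem IsPathCategory.eqv_cancel_right (hS : IsPathCategory S) {X Y Z : C}
    {f : X ⟶ Y} {g : Y ⟶ Z} (hg : S.Eqv g) (hfg : S.Eqv (f ≫ g)) : S.Eqv f :=
  (hS.two_out_of_six f g (𝟙 _) hfg (by rwa [Category.comp_id])).1

/-! ### Fibrations and pullbacks -/

theorem IsPathCategory.fib_pb (hS : IsPathCategory S) {X Y Z P : C} {f : X ⟶ Z}
    {g : Y ⟶ Z} {p₁ : P ⟶ X} {p₂ : P ⟶ Y} (hf : S.Fib f) (h : IsPB p₁ p₂ f g) :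
    S.Fib p₂ := by
  obtain ⟨P', q₁, q₂, hP', hF⟩ := hS.pullback f g hf
  have hj2 : hP'.lift p₁ p₂ h.1 ≫ q₂ = p₂ := hP'.lift_snd _ _ _
  have hjk : hP'.lift p₁ p₂ h.1 ≫ h.lift q₁ q₂ hP'.1 = 𝟙 P := by
    refine h.hom_ext ?_ ?_ <;>
      simp [Category.assoc, IsPB.lift_fst, IsPB.lift_snd]
  have hkj : h.lift q₁ q₂ hP'.1 ≫ hP'.lift p₁ p₂ h.1 = 𝟙 P' := by
    refine hP'.hom_ext ?_ ?_ <;>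
      simp [Category.assoc, IsPB.lift_fst, IsPB.lift_snd]
  have : IsIso (hP'.lift p₁ p₂ h.1) := ⟨h.lift q₁ q₂ hP'.1, hjk, hkj⟩
  rw [← hj2]
  exact hS.fib_comp _ _ (hS.fib_of_iso _ this) hF

/-! ### Binary products -/

noncomputable def IsBinProd.lift {P X Y Q : C} {p₁ : P ⟶ X} {p₂ : P ⟶ Y}
    (h : IsBinProd p₁ p₂) (q₁ : Q ⟶ X) (q₂ : Q ⟶ Y) : Q ⟶ P :=
  (h Q q₁ q₂).choose

@[simp] theorem IsBinProd.lift_fst {P X Y Q : C} {p₁ : P ⟶ X} {p₂ : P ⟶ Y}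
    (h : IsBinProd p₁ p₂) (q₁ : Q ⟶ X) (q₂ : Q ⟶ Y) :
    h.lift q₁ q₂ ≫ p₁ = q₁ := (h Q q₁ q₂).choose_spec.1.1

@[simp] theorem IsBinProd.lift_snd {P X Y Q : C} {p₁ : P ⟶ X} {p₂ : P ⟶ Y}
    (h : IsBinProd p₁ p₂) (q₁ : Q ⟶ X) (q₂ : Q ⟶ Y) :
    h.lift q₁ q₂ ≫ p₂ = q₂ := (h Q q₁ q₂).choose_spec.1.2

theorem IsBinProd.hom_ext {P X Y Q : C} {p₁ : P ⟶ X} {p₂ : P ⟶ Y}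
    (h : IsBinProd p₁ p₂) {a b : Q ⟶ P}
    (h1 : a ≫ p₁ = b ≫ p₁) (h2 : a ≫ p₂ = b ≫ p₂) : a = b := by
  obtain ⟨u, _, hu⟩ := h Q (b ≫ p₁) (b ≫ p₂)
  rw [hu a ⟨h1, h2⟩, hu b ⟨rfl, rfl⟩]

theorem IsPathCategory.binProd_exists (hS : IsPathCategory S) (X Y : C) :
    ∃ (W : C) (π₁ : W ⟶ X) (π₂ : W ⟶ Y), IsBinProd π₁ π₂ ∧ S.Fib π₁ ∧ S.Fib π₂ := by
  obtain ⟨T, hT, hFT⟩ := hS.terminal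
  obtain ⟨tX, _⟩ := hT X
  obtain ⟨tY, _⟩ := hT Y
  obtain ⟨W, v₁, v₂, hpb, hf2⟩ := hS.pullback tX tY (hFT X tX)
  refine ⟨W, v₁, v₂, fun Q q₁ q₂ => ?_, hS.fib_pb (hFT Y tY) hpb.symm, hf2⟩
  obtain ⟨fQ, hfQ⟩ := hT Q
  exact hpb.2 Q q₁ q₂ (by rw [hfQ (q₁ ≫ tX), hfQ (q₂ ≫ tY)])

theorem IsBinProd.fib (hS : IsPathCategory S) {W X Y : C} {π₁ : W ⟶ X}
    {π₂ : W ⟶ Y} (h : IsBinProd π₁ π₂) : S.Fib π₁ ∧ S.Fib π₂ := by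
  obtain ⟨V, v₁, v₂, hV, hf1, hf2⟩ := hS.binProd_exists X Y
  have hjk : hV.lift π₁ π₂ ≫ h.lift v₁ v₂ = 𝟙 W := by
    refine h.hom_ext ?_ ?_ <;>
      simp [Category.assoc, IsBinProd.lift_fst, IsBinProd.lift_snd]
  have hkj : h.lift v₁ v₂ ≫ hV.lift π₁ π₂ = 𝟙 V := by
    refine hV.hom_ext ?_ ?_ <;>
      simp [Category.assoc, IsBinProd.lift_fst, IsBinProd.lift_snd]
  have hiso : IsIso (hV.lift π₁ π₂) := ⟨h.lift v₁ v₂, hjk, hkj⟩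
  constructor
  · rw [← hV.lift_fst π₁ π₂]
    exact hS.fib_comp _ _ (hS.fib_of_iso _ hiso) hf1
  · rw [← hV.lift_snd π₁ π₂]
    exact hS.fib_comp _ _ (hS.fib_of_iso _ hiso) hf2

/-! ### Path object basic properties -/

theorem IsPathObj.props (hS : IsPathCategory S) {X PX : C} {r : X ⟶ PX}
    {s t : PX ⟶ X} (h : IsPathObj S r s t) :
    S.Fib s ∧ S.Fib t ∧ S.Eqv s ∧ S.Eqv t := by
  obtain ⟨her, hrs, hrt, W, π₁, π₂, hpo, hbin, h1, h2, hfh⟩ := h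
  obtain ⟨hf1, hf2⟩ := hbin.fib hS
  refine ⟨?_, ?_, ?_, ?_⟩
  · rw [← h1]; exact hS.fib_comp _ _ hfh hf1
  · rw [← h2]; exact hS.fib_comp _ _ hfh hf2
  · exact hS.eqv_cancel_left her (by rw [hrs]; exact hS.eqv_id X)
  · exact hS.eqv_cancel_left her (by rw [hrt]; exact hS.eqv_id X)

theorem IsRelPathObj.props (hS : IsPathCategory S) {X I PX : C} {p : X ⟶ I}
    {r : X ⟶ PX} {s t : PX ⟶ X} (hp : S.Fib p) (h : IsRelPathObj S p r s t) :
    S.Fib s ∧ S.Fib t ∧ S.Eqv s ∧ S.Eqv t := by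
  obtain ⟨her, hrs, hrt, hstp, W, π₁, π₂, hpo, hpb, h1, h2, hfh⟩ := h
  have hf1 : S.Fib π₁ := hS.fib_pb hp hpb.symm
  have hf2 : S.Fib π₂ := hS.fib_pb hp hpb
  refine ⟨?_, ?_, ?_, ?_⟩
  · rw [← h1]; exact hS.fib_comp _ _ hfh hf1
  · rw [← h2]; exact hS.fib_comp _ _ hfh hf2
  · exact hS.eqv_cancel_left her (by rw [hrs]; exact hS.eqv_id X)
  · exact hS.eqv_cancel_left her (by rw [hrt]; exact hS.eqv_id X)

/-! ### Homotopy basics -/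

theorem IsBinProd.symm {P X Y : C} {p₁ : P ⟶ X} {p₂ : P ⟶ Y}
    (h : IsBinProd p₁ p₂) : IsBinProd p₂ p₁ := by
  intro Q q₁ q₂
  obtain ⟨u, ⟨hu1, hu2⟩, hu⟩ := h Q q₂ q₁
  exact ⟨u, ⟨hu2, hu1⟩, fun y hy => hu y ⟨hy.2, hy.1⟩⟩

theorem IsPathObj.symm {X PX : C} {r : X ⟶ PX} {s t : PX ⟶ X}
    (h : IsPathObj S r s t) : IsPathObj S r t s := by
  obtain ⟨her, hrs, hrt, W, π₁, π₂, hmap, hbin, h1, h2, hfh⟩ := h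
  exact ⟨her, hrt, hrs, W, π₂, π₁, hmap, hbin.symm, h2, h1, hfh⟩

theorem IsRelPathObj.symm {X I PX : C} {p : X ⟶ I} {r : X ⟶ PX} {s t : PX ⟶ X}
    (h : IsRelPathObj S p r s t) : IsRelPathObj S p r t s := by
  obtain ⟨her, hrs, hrt, hst, W, π₁, π₂, hmap, hpb, h1, h2, hfh⟩ := h
  exact ⟨her, hrt, hrs, hst.symm, W, π₂, π₁, hmap, hpb.symm, h2, h1, hfh⟩

theorem IsPathCategory.homotopic_refl (hS : IsPathCategory S) {Z X : C}
    (u : Z ⟶ X) : Homotopic S u u := by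
  obtain ⟨PX, r, s, t, hpo⟩ := hS.path_obj X
  exact ⟨PX, r, s, t, hpo, u ≫ r,
    by rw [Category.assoc, hpo.2.1, Category.comp_id],
    by rw [Category.assoc, hpo.2.2.1, Category.comp_id]⟩

theorem Homotopic.symm {Z X : C} {u v : Z ⟶ X} (h : Homotopic S u v) :
    Homotopic S v u := by
  obtain ⟨PX, r, s, t, hpo, H, h1, h2⟩ := h
  exact ⟨PX, r, t, s, hpo.symm, H, h2, h1⟩

theorem Homotopic.precomp {Z' Z X : C} (a : Z' ⟶ Z) {u v : Z ⟶ X}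
    (h : Homotopic S u v) : Homotopic S (a ≫ u) (a ≫ v) := by
  obtain ⟨PX, r, s, t, hpo, H, h1, h2⟩ := h
  exact ⟨PX, r, s, t, hpo, a ≫ H, by rw [Category.assoc, h1], by rw [Category.assoc, h2]⟩

theorem FibHomotopic.symm {Z X I : C} {p : X ⟶ I} {u v : Z ⟶ X}
    (h : FibHomotopic S p u v) : FibHomotopic S p v u := by
  obtain ⟨PX, r, s, t, hpo, H, h1, h2⟩ := h
  exact ⟨PX, r, t, s, hpo.symm, H, h2, h1⟩

theorem FibHomotopic.precomp {Z' Z X I : C} {p : X ⟶ I} (a : Z' ⟶ Z) {u v : Z ⟶ X}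
    (h : FibHomotopic S p u v) : FibHomotopic S p (a ≫ u) (a ≫ v) := by
  obtain ⟨PX, r, s, t, hpo, H, h1, h2⟩ := h
  exact ⟨PX, r, s, t, hpo, a ≫ H, by rw [Category.assoc, h1], by rw [Category.assoc, h2]⟩

theorem IsPathCategory.eqv_of_homotopic (hS : IsPathCategory S) {Z X : C}
    {u v : Z ⟶ X} (h : Homotopic S u v) (hu : S.Eqv u) : S.Eqv v := by
  obtain ⟨PX, r, s, t, hpo, H, h1, h2⟩ := h
  obtain ⟨hfs, hft, hes, het⟩ := hpo.props hS
  have hH : S.Eqv H := hS.eqv_cancel_right hes (by rwa [h1])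
  rw [← h2]
  exact hS.eqv_comp hH het

/-! ### Factorization -/

theorem IsPathCategory.factor (hS : IsPathCategory S) {A B : C} (α : A ⟶ B) :
    ∃ (M : C) (ι : A ⟶ M) (ρ : M ⟶ A) (qf : M ⟶ B),
      ι ≫ ρ = 𝟙 A ∧ S.Fib ρ ∧ S.Eqv ρ ∧ S.Eqv ι ∧ S.Fib qf ∧ ι ≫ qf = α := by
  obtain ⟨PB, rB, sB, tB, hpo⟩ := hS.path_obj B
  obtain ⟨hfs, hft, hes, het⟩ := hpo.props hS
  obtain ⟨her, hrs, hrt, Wb, b₁, b₂, hB, hbin, hb1, hb2, hfhB⟩ := hpo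
  obtain ⟨M, mP, mA, hMpb, hFmA0⟩ := hS.pullback sB α hfs
  obtain ⟨hFmA, hEmA⟩ := hS.triv_fib_pb sB α mP mA hfs hes hMpb
  obtain ⟨ι, ⟨hι1, hι2⟩, -⟩ := hMpb.2 A (α ≫ rB) (𝟙 A)
    (by rw [Category.assoc, hrs, Category.comp_id, Category.id_comp])
  have hEι : S.Eqv ι :=
    hS.eqv_cancel_right hEmA (by rw [hι2]; exact hS.eqv_id A)
  have hιqf : ι ≫ (mP ≫ tB) = α := by
    rw [← Category.assoc, hι1, Category.assoc, hrt, Category.comp_id]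
  obtain ⟨Pc, pA, pB, hPc, hfpA, hfpB⟩ := hS.binProd_exists A B
  obtain ⟨φ, ⟨hφ1, hφ2⟩, -⟩ := hPc M mA (mP ≫ tB)
  obtain ⟨ψ, ⟨hψ1, hψ2⟩, -⟩ := hbin Pc (pA ≫ α) pB
  have hcomm : mP ≫ hB = φ ≫ ψ := by
    refine hbin.hom_ext ?_ ?_
    · rw [Category.assoc, hb1, hMpb.1, Category.assoc, hψ1, ← Category.assoc, hφ1]
    · rw [Category.assoc, hb2, Category.assoc, hψ2, hφ2]
  have hPBφ : IsPB mP φ hB ψ := by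
    refine ⟨hcomm, fun V vP vQ hw => ?_⟩
    have hw1 : vP ≫ sB = (vQ ≫ pA) ≫ α := by
      have := congrArg (fun z => z ≫ b₁) hw
      simpa only [Category.assoc, hb1, hψ1] using this
    have hw2 : vP ≫ tB = vQ ≫ pB := by
      have := congrArg (fun z => z ≫ b₂) hw
      simpa only [Category.assoc, hb2, hψ2] using this
    obtain ⟨u, ⟨hu1, hu2⟩, huu⟩ := hMpb.2 V vP (vQ ≫ pA) hw1
    have huφ : u ≫ φ = vQ := by
      refine hPc.hom_ext ?_ ?_
      · rw [Category.assoc, hφ1, hu2]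
      · rw [Category.assoc, hφ2, ← Category.assoc, hu1, hw2]
    refine ⟨u, ⟨hu1, huφ⟩, fun y hy => huu y ⟨hy.1, ?_⟩⟩
    rw [← hy.2, Category.assoc, hφ1]
  have hFφ : S.Fib φ := hS.fib_pb hfhB hPBφ
  have hFqf : S.Fib (mP ≫ tB) := by
    have : φ ≫ pB = mP ≫ tB := hφ2
    rw [← this]
    exact hS.fib_comp _ _ hFφ hfpB
  exact ⟨M, ι, mA, mP ≫ tB, hι2, hFmA, hEmA, hEι, hFqf, hιqf⟩

/-! ### The lifting theorem (strict lower triangle) -/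

theorem IsPathCategory.lift₀ (hS : IsPathCategory S) {A B E D : C} {w : A ⟶ B}
    {p : E ⟶ D} {u : A ⟶ E} {v : B ⟶ D} (hw : S.Eqv w) (hp : S.Fib p)
    (hc : u ≫ p = w ≫ v) : ∃ l : B ⟶ E, l ≫ p = v := by
  obtain ⟨P, p₁, p₂, hpb, hFp₂⟩ := hS.pullback p v hp
  obtain ⟨ub, ⟨hub1, hub2⟩, -⟩ := hpb.2 A u w hc
  obtain ⟨M, ι, ρ, qf, hιρ, hFρ, hEρ, hEι, hFqf, hιqf⟩ := hS.factor ub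
  have hFθ : S.Fib (qf ≫ p₂) := hS.fib_comp _ _ hFqf hFp₂
  have hEθ : S.Eqv (qf ≫ p₂) := by
    refine hS.eqv_cancel_left hEι ?_
    rw [← Category.assoc, hιqf, hub2]; exact hw
  obtain ⟨τ, hτ⟩ := hS.triv_fib_sect _ hFθ hEθ
  refine ⟨τ ≫ qf ≫ p₁, ?_⟩
  have h2 : τ ≫ qf ≫ p₂ ≫ v = (τ ≫ qf ≫ p₂) ≫ v := by simp only [Category.assoc]
  simp only [Category.assoc]
  rw [hpb.1, h2, hτ, Category.id_comp]

/-! ### Homotopies: postcomposition, transitivity, inverses -/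

theorem Homotopic.postcomp (hS : IsPathCategory S) {Z X B : C} {u v : Z ⟶ X}
    (h : Homotopic S u v) (b : X ⟶ B) : Homotopic S (u ≫ b) (v ≫ b) := by
  obtain ⟨PX, r, s, t, hpo, H, h1, h2⟩ := h
  have hEr := hpo.1
  have hrs := hpo.2.1
  have hrt := hpo.2.2.1
  obtain ⟨PB, rB, sB, tB, hpoB⟩ := hS.path_obj B
  have hpoB' := hpoB
  obtain ⟨herB, hrsB, hrtB, Wb, b₁, b₂, hB, hbin, hb1, hb2, hfhB⟩ := hpoB
  obtain ⟨ψ, ⟨hψ1, hψ2⟩, -⟩ := hbin PX (s ≫ b) (t ≫ b)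
  have hcomm : (b ≫ rB) ≫ hB = r ≫ ψ := by
    refine hbin.hom_ext ?_ ?_
    · simp only [Category.assoc, hb1, hψ1, hrsB, Category.comp_id,
        reassoc_of% hrs]
    · simp only [Category.assoc, hb2, hψ2, hrtB, Category.comp_id,
        reassoc_of% hrt]
  obtain ⟨l, hl⟩ := hS.lift₀ hEr hfhB hcomm
  refine ⟨PB, rB, sB, tB, hpoB', H ≫ l, ?_, ?_⟩
  · rw [Category.assoc, ← hb1, ← Category.assoc l, hl, hψ1, ← Category.assoc, h1]
  · rw [Category.assoc, ← hb2, ← Category.assoc l, hl, hψ2, ← Category.assoc, h2]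

theorem IsPathCategory.htpb (hS : IsPathCategory S) {M A V : C} {p : M ⟶ A}
    (hFp : S.Fib p) (hEp : S.Eqv p) {u v : V ⟶ M} (h : u ≫ p = v ≫ p) :
    Homotopic S u v := by
  obtain ⟨N, n₁, n₂, hNpb, hFn₂⟩ := hS.pullback p p hFp
  obtain ⟨hFn₁, hEn₁⟩ := hS.triv_fib_pb p p n₂ n₁ hFp hEp hNpb.symm
  obtain ⟨d, ⟨hd1, hd2⟩, -⟩ := hNpb.2 M (𝟙 M) (𝟙 M) rfl
  have hEd : S.Eqv d :=
    hS.eqv_cancel_right hEn₁ (by rw [hd1]; exact hS.eqv_id M)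
  obtain ⟨PM, rM, sM, tM, hpoM⟩ := hS.path_obj M
  have hpoM' := hpoM
  obtain ⟨herM, hrsM, hrtM, Wm, c₁, c₂, hM, hbinM, hc1, hc2, hfhM⟩ := hpoM
  obtain ⟨ψ, ⟨hψ1, hψ2⟩, -⟩ := hbinM N n₁ n₂
  have hcomm : rM ≫ hM = d ≫ ψ := by
    refine hbinM.hom_ext ?_ ?_
    · simp only [Category.assoc, hc1, hψ1, hrsM, hd1]
    · simp only [Category.assoc, hc2, hψ2, hrtM, hd2]
  obtain ⟨l, hl⟩ := hS.lift₀ hEd hfhM hcomm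
  obtain ⟨K, ⟨hK1, hK2⟩, -⟩ := hNpb.2 V u v h
  refine ⟨PM, rM, sM, tM, hpoM', K ≫ l, ?_, ?_⟩
  · rw [Category.assoc, ← hc1, ← Category.assoc l, hl, hψ1]; exact hK1
  · rw [Category.assoc, ← hc2, ← Category.assoc l, hl, hψ2]; exact hK2

theorem Homotopic.trans (hS : IsPathCategory S) {Z X : C} {u v w : Z ⟶ X}
    (h1 : Homotopic S u v) (h2 : Homotopic S v w) : Homotopic S u w := by
  obtain ⟨P₁, r₁, s₁, t₁, hpo₁, H₁, hH₁s, hH₁t⟩ := h1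
  obtain ⟨P₂, r₂, s₂, t₂, hpo₂, H₂, hH₂s, hH₂t⟩ := h2
  obtain ⟨hfs₂, hft₂, hes₂, het₂⟩ := hpo₂.props hS
  obtain ⟨N, nQ₂, nQ₁, hNpb, -⟩ := hS.pullback s₂ t₁ hfs₂
  obtain ⟨hFn₁, hEn₁⟩ := hS.triv_fib_pb s₂ t₁ nQ₂ nQ₁ hfs₂ hes₂ hNpb
  obtain ⟨d, ⟨hd2, hd1⟩, -⟩ := hNpb.2 X r₂ r₁
    (by rw [hpo₂.2.1, hpo₁.2.2.1])
  have hEd : S.Eqv d := hS.eqv_cancel_right hEn₁ (by rw [hd1]; exact hpo₁.1)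
  obtain ⟨P₃, r₃, s₃, t₃, hpo₃⟩ := hS.path_obj X
  have hpo₃' := hpo₃
  obtain ⟨her₃, hrs₃, hrt₃, W₃, c₁, c₂, h₃, hbin₃, hc1, hc2, hfh₃⟩ := hpo₃
  obtain ⟨ψ, ⟨hψ1, hψ2⟩, -⟩ := hbin₃ N (nQ₁ ≫ s₁) (nQ₂ ≫ t₂)
  have hcomm : r₃ ≫ h₃ = d ≫ ψ := by
    refine hbin₃.hom_ext ?_ ?_
    · simp only [Category.assoc, hc1, hψ1, hrs₃, reassoc_of% hd1,
        hpo₁.2.1]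
    · simp only [Category.assoc, hc2, hψ2, hrt₃, reassoc_of% hd2,
        hpo₂.2.2.1]
  obtain ⟨l, hl⟩ := hS.lift₀ hEd hfh₃ hcomm
  obtain ⟨K, ⟨hK2, hK1⟩, -⟩ := hNpb.2 Z H₂ H₁ (by rw [hH₂s, hH₁t])
  refine ⟨P₃, r₃, s₃, t₃, hpo₃', K ≫ l, ?_, ?_⟩
  · rw [Category.assoc, ← hc1, ← Category.assoc l, hl, hψ1, ← Category.assoc, hK1]
    exact hH₁s
  · rw [Category.assoc, ← hc2, ← Category.assoc l, hl, hψ2, ← Category.assoc, hK2]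
    exact hH₂t

theorem IsPathCategory.lift_h (hS : IsPathCategory S) {A B E D : C} {w : A ⟶ B}
    {p : E ⟶ D} {u : A ⟶ E} {v : B ⟶ D} (hw : S.Eqv w) (hp : S.Fib p)
    (hc : u ≫ p = w ≫ v) : ∃ l : B ⟶ E, l ≫ p = v ∧ Homotopic S (w ≫ l) u := by
  obtain ⟨P, p₁, p₂, hpb, hFp₂⟩ := hS.pullback p v hp
  obtain ⟨ub, ⟨hub1, hub2⟩, -⟩ := hpb.2 A u w hc
  obtain ⟨M, ι, ρ, qf, hιρ, hFρ, hEρ, hEι, hFqf, hιqf⟩ := hS.factor ub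
  have hFθ : S.Fib (qf ≫ p₂) := hS.fib_comp _ _ hFqf hFp₂
  have hEθ : S.Eqv (qf ≫ p₂) := by
    refine hS.eqv_cancel_left hEι ?_
    rw [← Category.assoc, hιqf, hub2]; exact hw
  obtain ⟨τ, hτ⟩ := hS.triv_fib_sect _ hFθ hEθ
  refine ⟨τ ≫ qf ≫ p₁, ?_, ?_⟩
  · have h2 : τ ≫ qf ≫ p₂ ≫ v = (τ ≫ qf ≫ p₂) ≫ v := by simp only [Category.assoc]
    simp only [Category.assoc]
    rw [hpb.1, h2, hτ, Category.id_comp]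
  · have hh : Homotopic S (w ≫ τ) ι := by
      refine hS.htpb hFθ hEθ ?_
      rw [Category.assoc, hτ, Category.comp_id, ← Category.assoc, hιqf, hub2]
    have := hh.postcomp hS (qf ≫ p₁)
    simp only [Category.assoc] at this ⊢
    rwa [← Category.assoc ι, hιqf, hub1] at this

theorem IsPathCategory.hinv (hS : IsPathCategory S) {Y Z : C} {w : Y ⟶ Z}
    (hw : S.Eqv w) :
    ∃ w' : Z ⟶ Y, Homotopic S (w ≫ w') (𝟙 Y) ∧ Homotopic S (w' ≫ w) (𝟙 Z) ∧
      S.Eqv w' := by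
  obtain ⟨M, ι, ρ, qf, hιρ, hFρ, hEρ, hEι, hFqf, hιqf⟩ := hS.factor w
  have hEqf : S.Eqv qf := hS.eqv_cancel_left hEι (by rwa [hιqf])
  obtain ⟨σ, hσ⟩ := hS.triv_fib_sect qf hFqf hEqf
  refine ⟨σ ≫ ρ, ?_, ?_, ?_⟩
  · have h0 : Homotopic S (qf ≫ σ) (𝟙 M) := by
      refine hS.htpb hFqf hEqf ?_
      rw [Category.assoc, hσ, Category.comp_id, Category.id_comp]
    have := (h0.precomp ι).postcomp hS ρ
    simp only [Category.assoc, Category.comp_id] at this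
    rw [hιρ] at this
    rw [← hιqf]
    simpa only [Category.assoc] using this
  · have h0 : Homotopic S (ρ ≫ ι) (𝟙 M) := by
      refine hS.htpb hFρ hEρ ?_
      rw [Category.assoc, hιρ, Category.comp_id, Category.id_comp]
    have := (h0.precomp σ).postcomp hS qf
    simp only [Category.assoc, Category.comp_id] at this
    rw [hσ] at this
    rw [← hιqf]
    simpa only [Category.assoc] using this
  · have h1 : Homotopic S (𝟙 Z) ((σ ≫ ρ) ≫ w) := by
      have h0 : Homotopic S (ρ ≫ ι) (𝟙 M) := by
        refine hS.htpb hFρ hEρ ?_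
        rw [Category.assoc, hιρ, Category.comp_id, Category.id_comp]
      have := ((h0.precomp σ).postcomp hS qf).symm
      simp only [Category.assoc, Category.comp_id] at this
      rw [hσ] at this
      rw [← hιqf]
      simpa only [Category.assoc] using this
    exact hS.eqv_cancel_right hw (hS.eqv_of_homotopic h1 (hS.eqv_id Z))

theorem IsPathCategory.homotopic_cancel (hS : IsPathCategory S) {A B X : C}
    {ι : A ⟶ B} {a b : B ⟶ X} (hι : S.Eqv ι)
    (h : Homotopic S (ι ≫ a) (ι ≫ b)) : Homotopic S a b := by
  obtain ⟨ι', hι'1, hι'2, hEι'⟩ := hS.hinv hι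
  have h1 : Homotopic S a (ι' ≫ ι ≫ a) := by
    have := (hι'2.symm).postcomp hS a
    simpa only [Category.assoc, Category.id_comp] using this
  have h2 : Homotopic S (ι' ≫ ι ≫ a) (ι' ≫ ι ≫ b) := h.precomp ι'
  have h3 : Homotopic S (ι' ≫ ι ≫ b) b := by
    have := hι'2.postcomp hS b
    simpa only [Category.assoc, Category.id_comp] using this
  exact (h1.trans hS h2).trans hS h3

/-! ### Canonical relative path objects -/

theorem IsPathCategory.relPathObj (hS : IsPathCategory S) {E B : C} {p : E ⟶ B}
    (hp : S.Fib p) :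
    ∃ (Q W : C) (r : E ⟶ Q) (s t : Q ⟶ E) (w₁ w₂ : W ⟶ E) (h : Q ⟶ W),
      IsRelPathObj S p r s t ∧ IsPB w₁ w₂ p p ∧ h ≫ w₁ = s ∧ h ≫ w₂ = t ∧
        S.Fib h := by
  obtain ⟨W, w₁, w₂, hW, hFw₂⟩ := hS.pullback p p hp
  obtain ⟨δ, ⟨hδ1, hδ2⟩, -⟩ := hW.2 E (𝟙 E) (𝟙 E) rfl
  obtain ⟨PW, rW, sW, tW, hpoW⟩ := hS.path_obj W
  obtain ⟨hfsW, hftW, hesW, hetW⟩ := hpoW.props hS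
  obtain ⟨herW, hrsW, hrtW, Wb, b₁, b₂, hB, hbin, hb1, hb2, hfhB⟩ := hpoW
  obtain ⟨Q, mP, mE, hQpb, hFmE0⟩ := hS.pullback sW δ hfsW
  obtain ⟨hFmE, hEmE⟩ := hS.triv_fib_pb sW δ mP mE hfsW hesW hQpb
  obtain ⟨r, ⟨hr1, hr2⟩, -⟩ := hQpb.2 E (δ ≫ rW) (𝟙 E)
    (by rw [Category.assoc, hrsW, Category.comp_id, Category.id_comp])
  have hEr : S.Eqv r :=
    hS.eqv_cancel_right hEmE (by rw [hr2]; exact hS.eqv_id E)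
  have hrh : r ≫ mP ≫ tW = δ := by
    rw [← Category.assoc, hr1, Category.assoc, hrtW, Category.comp_id]
  -- fibrancy of the pairing, via the product E × W
  obtain ⟨Pc, pE, pW, hPc, hfpE, hfpW⟩ := hS.binProd_exists E W
  obtain ⟨φ, ⟨hφ1, hφ2⟩, -⟩ := hPc Q mE (mP ≫ tW)
  obtain ⟨ψ, ⟨hψ1, hψ2⟩, -⟩ := hbin Pc (pE ≫ δ) pW
  have hcomm : mP ≫ hB = φ ≫ ψ := by
    refine hbin.hom_ext ?_ ?_
    · rw [Category.assoc, hb1, hQpb.1, Category.assoc, hψ1, ← Category.assoc, hφ1]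
    · rw [Category.assoc, hb2, Category.assoc, hψ2, hφ2]
  have hPBφ : IsPB mP φ hB ψ := by
    refine ⟨hcomm, fun V vP vQ hw => ?_⟩
    have hw1 : vP ≫ sW = (vQ ≫ pE) ≫ δ := by
      have := congrArg (fun z => z ≫ b₁) hw
      simpa only [Category.assoc, hb1, hψ1] using this
    have hw2 : vP ≫ tW = vQ ≫ pW := by
      have := congrArg (fun z => z ≫ b₂) hw
      simpa only [Category.assoc, hb2, hψ2] using this
    obtain ⟨uu, ⟨hu1, hu2⟩, huu⟩ := hQpb.2 V vP (vQ ≫ pE) hw1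
    have huφ : uu ≫ φ = vQ := by
      refine hPc.hom_ext ?_ ?_
      · rw [Category.assoc, hφ1, hu2]
      · rw [Category.assoc, hφ2, ← Category.assoc, hu1, hw2]
    refine ⟨uu, ⟨hu1, huφ⟩, fun y hy => huu y ⟨hy.1, ?_⟩⟩
    rw [← hy.2, Category.assoc, hφ1]
  have hFφ : S.Fib φ := hS.fib_pb hfhB hPBφ
  have hFh : S.Fib (mP ≫ tW) := by
    rw [← hφ2]; exact hS.fib_comp _ _ hFφ hfpW
  refine ⟨Q, W, r, (mP ≫ tW) ≫ w₁, (mP ≫ tW) ≫ w₂, w₁, w₂, mP ≫ tW,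
    ⟨hEr, ?_, ?_, ?_, W, w₁, w₂, mP ≫ tW, hW, rfl, rfl, hFh⟩, hW, rfl, rfl, hFh⟩
  · rw [← Category.assoc, hrh, hδ1]
  · rw [← Category.assoc, hrh, hδ2]
  · simp only [Category.assoc, hW.1]

/-! ### Fibrewise homotopies -/

theorem FibHomotopic.toHomotopic (hS : IsPathCategory S) {V E D : C} {p : E ⟶ D}
    {u v : V ⟶ E} (h : FibHomotopic S p u v) : Homotopic S u v := by
  obtain ⟨Q, r, s, t, hrpo, K, hKs, hKt⟩ := h
  obtain ⟨PE, rE, sE, tE, hpoE⟩ := hS.path_obj E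
  have hpoE' := hpoE
  obtain ⟨herE, hrsE, hrtE, We, c₁, c₂, hE, hbinE, hc1, hc2, hfhE⟩ := hpoE
  obtain ⟨ψ, ⟨hψ1, hψ2⟩, -⟩ := hbinE Q s t
  have hcomm : rE ≫ hE = r ≫ ψ := by
    refine hbinE.hom_ext ?_ ?_
    · simp only [Category.assoc, hc1, hψ1, hrsE, hrpo.2.1]
    · simp only [Category.assoc, hc2, hψ2, hrtE, hrpo.2.2.1]
  obtain ⟨l, hl⟩ := hS.lift₀ hrpo.1 hfhE hcomm
  refine ⟨PE, rE, sE, tE, hpoE', K ≫ l, ?_, ?_⟩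
  · rw [Category.assoc, ← hc1, ← Category.assoc l, hl, hψ1]; exact hKs
  · rw [Category.assoc, ← hc2, ← Category.assoc l, hl, hψ2]; exact hKt

theorem IsPathCategory.htpb_fib (hS : IsPathCategory S) {M B V : C} {θ : M ⟶ B}
    (hFθ : S.Fib θ) (hEθ : S.Eqv θ) {u v : V ⟶ M} (h : u ≫ θ = v ≫ θ) :
    FibHomotopic S θ u v := by
  obtain ⟨Q, W, r, s, t, w₁, w₂, hq, hrpo, hWpb, hh1, hh2, hFh⟩ := hS.relPathObj hFθ
  obtain ⟨hFw₁, hEw₁⟩ := hS.triv_fib_pb θ θ w₂ w₁ hFθ hEθ hWpb.symm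
  obtain ⟨d, ⟨hd1, hd2⟩, -⟩ := hWpb.2 M (𝟙 M) (𝟙 M) rfl
  have hEd : S.Eqv d :=
    hS.eqv_cancel_right hEw₁ (by rw [hd1]; exact hS.eqv_id M)
  have hcomm : r ≫ hq = d ≫ 𝟙 W := by
    rw [Category.comp_id]
    refine hWpb.hom_ext ?_ ?_
    · rw [Category.assoc, hh1, hrpo.2.1, hd1]
    · rw [Category.assoc, hh2, hrpo.2.2.1, hd2]
  obtain ⟨l, hl⟩ := hS.lift₀ hEd hFh hcomm
  obtain ⟨K, ⟨hK1, hK2⟩, -⟩ := hWpb.2 V u v h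
  refine ⟨Q, r, s, t, hrpo, K ≫ l, ?_, ?_⟩
  · rw [← hh1, Category.assoc, ← Category.assoc l, hl, Category.id_comp]; exact hK1
  · rw [← hh2, Category.assoc, ← Category.assoc l, hl, Category.id_comp]; exact hK2

theorem FibHomotopic.comp_over (hS : IsPathCategory S) {V M B E D : C}
    {θ : M ⟶ B} {p : E ⟶ D} (hp : S.Fib p) {c : M ⟶ E} {vm : B ⟶ D}
    (hc : c ≫ p = θ ≫ vm) {x y : V ⟶ M} (h : FibHomotopic S θ x y) :
    FibHomotopic S p (x ≫ c) (y ≫ c) := by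
  obtain ⟨Qθ, rθ, sθ, tθ, hrpoθ, K, hKs, hKt⟩ := h
  have hstθ : sθ ≫ θ = tθ ≫ θ := hrpoθ.2.2.2.1
  obtain ⟨Qp, Wp, rp, sp, tp, w₁, w₂, hq, hrpop, hWp, hh1, hh2, hFh⟩ :=
    hS.relPathObj hp
  obtain ⟨ψ, ⟨hψ1, hψ2⟩, -⟩ := hWp.2 Qθ (sθ ≫ c) (tθ ≫ c)
    (by
      have e1 : sθ ≫ c ≫ p = tθ ≫ c ≫ p := by
        rw [hc, ← Category.assoc, ← Category.assoc, hstθ]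
      simpa only [Category.assoc] using e1)
  have hcomm : (c ≫ rp) ≫ hq = rθ ≫ ψ := by
    refine hWp.hom_ext ?_ ?_
    · simp only [Category.assoc, hh1, hψ1, hrpop.2.1, Category.comp_id,
        reassoc_of% hrpoθ.2.1]
    · simp only [Category.assoc, hh2, hψ2, hrpop.2.2.1, Category.comp_id,
        reassoc_of% hrpoθ.2.2.1]
  obtain ⟨l, hl⟩ := hS.lift₀ hrpoθ.1 hFh hcomm
  refine ⟨Qp, rp, sp, tp, hrpop, K ≫ l, ?_, ?_⟩
  · rw [← hh1]
    simp only [Category.assoc]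
    rw [← Category.assoc l, hl, hψ1, ← Category.assoc, hKs]
  · rw [← hh2]
    simp only [Category.assoc]
    rw [← Category.assoc l, hl, hψ2, ← Category.assoc, hKt]

theorem FibHomotopic.trans (hS : IsPathCategory S) {V E D : C} {p : E ⟶ D}
    (hp : S.Fib p) {u v w : V ⟶ E} (h1 : FibHomotopic S p u v)
    (h2 : FibHomotopic S p v w) : FibHomotopic S p u w := by
  obtain ⟨Q₁, r₁, s₁, t₁, hrpo₁, H₁, hH₁s, hH₁t⟩ := h1
  obtain ⟨Q₂, r₂, s₂, t₂, hrpo₂, H₂, hH₂s, hH₂t⟩ := h2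
  obtain ⟨hfs₂, hft₂, hes₂, het₂⟩ := hrpo₂.props hS hp
  obtain ⟨N, nQ₂, nQ₁, hNpb, -⟩ := hS.pullback s₂ t₁ hfs₂
  obtain ⟨hFn₁, hEn₁⟩ := hS.triv_fib_pb s₂ t₁ nQ₂ nQ₁ hfs₂ hes₂ hNpb
  obtain ⟨d, ⟨hd2, hd1⟩, -⟩ := hNpb.2 E r₂ r₁ (by rw [hrpo₂.2.1, hrpo₁.2.2.1])
  have hEd : S.Eqv d := hS.eqv_cancel_right hEn₁ (by rw [hd1]; exact hrpo₁.1)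
  obtain ⟨Q₃, W₃, r₃, s₃, t₃, w₁, w₂, h₃, hrpo₃, hW₃, hh1, hh2, hFh₃⟩ :=
    hS.relPathObj hp
  obtain ⟨ψ, ⟨hψ1, hψ2⟩, -⟩ := hW₃.2 N (nQ₁ ≫ s₁) (nQ₂ ≫ t₂)
    (by
      have e1 : nQ₁ ≫ s₁ ≫ p = nQ₂ ≫ t₂ ≫ p := by
        rw [hrpo₁.2.2.2.1, ← hrpo₂.2.2.2.1, ← Category.assoc, ← hNpb.1,
          Category.assoc]
      simpa only [Category.assoc] using e1)
  have hcomm : r₃ ≫ h₃ = d ≫ ψ := by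
    refine hW₃.hom_ext ?_ ?_
    · simp only [Category.assoc, hh1, hψ1, hrpo₃.2.1, reassoc_of% hd1, hrpo₁.2.1]
    · simp only [Category.assoc, hh2, hψ2, hrpo₃.2.2.1, reassoc_of% hd2,
        hrpo₂.2.2.1]
  obtain ⟨l, hl⟩ := hS.lift₀ hEd hFh₃ hcomm
  obtain ⟨K, ⟨hK2, hK1⟩, -⟩ := hNpb.2 V H₂ H₁ (by rw [hH₂s, hH₁t])
  refine ⟨Q₃, r₃, s₃, t₃, hrpo₃, K ≫ l, ?_, ?_⟩
  · rw [← hh1]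
    simp only [Category.assoc]
    rw [← Category.assoc l, hl, hψ1, ← Category.assoc, hK1]
    exact hH₁s
  · rw [← hh2]
    simp only [Category.assoc]
    rw [← Category.assoc l, hl, hψ2, ← Category.assoc, hK2]
    exact hH₂t

theorem IsPathCategory.lift_fh (hS : IsPathCategory S) {A B E D : C} {w : A ⟶ B}
    {p : E ⟶ D} {u : A ⟶ E} {v : B ⟶ D} (hw : S.Eqv w) (hp : S.Fib p)
    (hc : u ≫ p = w ≫ v) :
    ∃ l : B ⟶ E, l ≫ p = v ∧ FibHomotopic S p (w ≫ l) u := by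
  obtain ⟨P, p₁, p₂, hpb, hFp₂⟩ := hS.pullback p v hp
  obtain ⟨ub, ⟨hub1, hub2⟩, -⟩ := hpb.2 A u w hc
  obtain ⟨M, ι, ρ, qf, hιρ, hFρ, hEρ, hEι, hFqf, hιqf⟩ := hS.factor ub
  have hFθ : S.Fib (qf ≫ p₂) := hS.fib_comp _ _ hFqf hFp₂
  have hEθ : S.Eqv (qf ≫ p₂) := by
    refine hS.eqv_cancel_left hEι ?_
    rw [← Category.assoc, hιqf, hub2]; exact hw
  obtain ⟨τ, hτ⟩ := hS.triv_fib_sect _ hFθ hEθ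
  refine ⟨τ ≫ qf ≫ p₁, ?_, ?_⟩
  · have h2 : τ ≫ qf ≫ p₂ ≫ v = (τ ≫ qf ≫ p₂) ≫ v := by simp only [Category.assoc]
    simp only [Category.assoc]
    rw [hpb.1, h2, hτ, Category.id_comp]
  · have hh : FibHomotopic S (qf ≫ p₂) (w ≫ τ) ι := by
      refine hS.htpb_fib hFθ hEθ ?_
      rw [Category.assoc, hτ, Category.comp_id, ← Category.assoc, hιqf, hub2]
    have hc' : (qf ≫ p₁) ≫ p = (qf ≫ p₂) ≫ v := by
      simp only [Category.assoc, hpb.1]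
    have := hh.comp_over hS hp hc'
    simp only [Category.assoc] at this ⊢
    rwa [← Category.assoc ι, hιqf, hub1] at this

/-! ### Transport -/

theorem IsPathCategory.transport (hS : IsPathCategory S) {A E D PD : C}
    {p : E ⟶ D} (hp : S.Fib p) {rD : D ⟶ PD} {sD tD : PD ⟶ D}
    (hpo : IsPathObj S rD sD tD) {L₀ : A ⟶ E} {H : A ⟶ PD}
    (hH : H ≫ sD = L₀ ≫ p) :
    ∃ L : A ⟶ E, L ≫ p = H ≫ tD ∧ Homotopic S L L₀ := by
  obtain ⟨hfsD, hftD, hesD, hetD⟩ := hpo.props hS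
  obtain ⟨Q, π, ε, hQpb, -⟩ := hS.pullback sD p hfsD
  obtain ⟨hFε, hEε⟩ := hS.triv_fib_pb sD p π ε hfsD hesD hQpb
  obtain ⟨ι, ⟨hι1, hι2⟩, -⟩ := hQpb.2 E (p ≫ rD) (𝟙 E)
    (by rw [Category.assoc, hpo.2.1, Category.comp_id, Category.id_comp])
  have hEι : S.Eqv ι :=
    hS.eqv_cancel_right hEε (by rw [hι2]; exact hS.eqv_id E)
  obtain ⟨Γ, hΓ, hΓh⟩ := hS.lift_h (p := p) (u := 𝟙 E) (v := π ≫ tD) hEι hp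
    (by rw [Category.id_comp, ← Category.assoc, hι1, Category.assoc, hpo.2.2.1,
      Category.comp_id])
  obtain ⟨lam, ⟨hlam1, hlam2⟩, -⟩ := hQpb.2 A H L₀ hH
  have hΓε : Homotopic S Γ ε := by
    refine hS.homotopic_cancel hEι ?_
    rw [hι2]
    exact hΓh
  refine ⟨lam ≫ Γ, ?_, ?_⟩
  · rw [Category.assoc, hΓ, ← Category.assoc, hlam1]
  · have := hΓε.precomp lam
    rwa [hlam2] at this

/-! ### Pulling back relative path objects -/

theorem IsPathCategory.pbRelPathObj (hS : IsPathCategory S) {Y X Z P : C}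
    {f : Y ⟶ X} (hf : S.Fib f) {m : Z ⟶ X} {p₁ : P ⟶ Y} {p₂ : P ⟶ Z}
    (hpb : IsPB p₁ p₂ f m)
    {PY W : C} {r : Y ⟶ PY} {s t : PY ⟶ Y} {π₁ π₂ : W ⟶ Y} {h : PY ⟶ W}
    (hrpo : IsRelPathObj S f r s t) (hW : IsPB π₁ π₂ f f)
    (hh1 : h ≫ π₁ = s) (hh2 : h ≫ π₂ = t) (hFh : S.Fib h) :
    ∃ (PP W' : C) (a₁ : PP ⟶ PY) (a₂ : PP ⟶ Z) (r' : P ⟶ PP) (s' t' : PP ⟶ P)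
      (b₁ : W' ⟶ W) (b₂ : W' ⟶ Z) (π₁' π₂' : W' ⟶ P) (h' : PP ⟶ W'),
      IsRelPathObj S p₂ r' s' t' ∧ IsPB π₁' π₂' p₂ p₂ ∧
      h' ≫ π₁' = s' ∧ h' ≫ π₂' = t' ∧ S.Fib h' ∧
      IsPB a₁ h' h b₁ ∧ s' ≫ p₁ = a₁ ≫ s ∧ s' ≫ p₂ = a₂ ∧
      t' ≫ p₁ = a₁ ≫ t ∧ t' ≫ p₂ = a₂ ∧ IsPB a₁ a₂ (s ≫ f) m := by
  obtain ⟨hFs, hFt, hEs, hEt⟩ := hrpo.props hS hf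
  have hstf : s ≫ f = t ≫ f := hrpo.2.2.2.1
  have hFπ₁ : S.Fib π₁ := hS.fib_pb hf hW.symm
  obtain ⟨PP, a₁, a₂, hPP, hFa₂⟩ := hS.pullback (s ≫ f) m (hS.fib_comp _ _ hFs hf)
  obtain ⟨s', ⟨hs'1, hs'2⟩, -⟩ := hpb.2 PP (a₁ ≫ s) a₂
    (by rw [Category.assoc, hPP.1])
  obtain ⟨t', ⟨ht'1, ht'2⟩, -⟩ := hpb.2 PP (a₁ ≫ t) a₂
    (by rw [Category.assoc, ← hstf, hPP.1])
  obtain ⟨r', ⟨hr'1, hr'2⟩, -⟩ := hPP.2 P (p₁ ≫ r) p₂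
    (by simp only [Category.assoc, reassoc_of% hrpo.2.1, hpb.1])
  have hr's' : r' ≫ s' = 𝟙 P := by
    refine hpb.hom_ext ?_ ?_
    · rw [Category.assoc, hs'1, ← Category.assoc, hr'1, Category.assoc, hrpo.2.1,
        Category.comp_id, Category.id_comp]
    · rw [Category.assoc, hs'2, hr'2, Category.id_comp]
  have hr't' : r' ≫ t' = 𝟙 P := by
    refine hpb.hom_ext ?_ ?_
    · rw [Category.assoc, ht'1, ← Category.assoc, hr'1, Category.assoc,
        hrpo.2.2.1, Category.comp_id, Category.id_comp]
    · rw [Category.assoc, ht'2, hr'2, Category.id_comp]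
  obtain ⟨W', b₁, b₂, hW', hFb₂⟩ := hS.pullback (π₁ ≫ f) m (hS.fib_comp _ _ hFπ₁ hf)
  obtain ⟨π₁', ⟨hπ₁'1, hπ₁'2⟩, -⟩ := hpb.2 W' (b₁ ≫ π₁) b₂
    (by rw [Category.assoc, hW'.1])
  obtain ⟨π₂', ⟨hπ₂'1, hπ₂'2⟩, -⟩ := hpb.2 W' (b₁ ≫ π₂) b₂
    (by rw [Category.assoc, ← hW.1, hW'.1])
  have hPBW' : IsPB π₁' π₂' p₂ p₂ := by
    refine ⟨by rw [hπ₁'2, hπ₂'2], fun Q q₁ q₂ hq => ?_⟩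
    obtain ⟨v, ⟨hv1, hv2⟩, -⟩ := hW.2 Q (q₁ ≫ p₁) (q₂ ≫ p₁)
      (by rw [Category.assoc, hpb.1, Category.assoc, hpb.1, ← Category.assoc,
        ← Category.assoc, hq])
    obtain ⟨uu, ⟨hu1, hu2⟩, huu⟩ := hW'.2 Q v (q₁ ≫ p₂)
      (by rw [← Category.assoc, hv1, Category.assoc, Category.assoc, hpb.1])
    have hup₁ : uu ≫ π₁' = q₁ := by
      refine hpb.hom_ext ?_ ?_
      · rw [Category.assoc, hπ₁'1, ← Category.assoc, hu1, hv1]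
      · rw [Category.assoc, hπ₁'2, hu2]
    have hup₂ : uu ≫ π₂' = q₂ := by
      refine hpb.hom_ext ?_ ?_
      · rw [Category.assoc, hπ₂'1, ← Category.assoc, hu1, hv2]
      · rw [Category.assoc, hπ₂'2, hu2, hq]
    refine ⟨uu, ⟨hup₁, hup₂⟩, fun y hy => ?_⟩
    have hyb₁ : y ≫ b₁ = v := by
      refine hW.hom_ext ?_ ?_
      · rw [Category.assoc, hv1, ← hy.1, Category.assoc, hπ₁'1]
      · rw [Category.assoc, hv2, ← hy.2, Category.assoc, hπ₂'1]
    refine huu y ⟨hyb₁, ?_⟩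
    rw [← hy.1, Category.assoc, hπ₁'2]
  obtain ⟨h', ⟨hh'b₁, hh'b₂⟩, -⟩ := hW'.2 PP (a₁ ≫ h) a₂
    (by simp only [Category.assoc, reassoc_of% hh1, hPP.1])
  have hh'1 : h' ≫ π₁' = s' := by
    refine hpb.hom_ext ?_ ?_
    · rw [Category.assoc, hπ₁'1, ← Category.assoc, hh'b₁, Category.assoc, hh1,
        hs'1]
    · rw [Category.assoc, hπ₁'2, hh'b₂, hs'2]
  have hh'2 : h' ≫ π₂' = t' := by
    refine hpb.hom_ext ?_ ?_
    · rw [Category.assoc, hπ₂'1, ← Category.assoc, hh'b₁, Category.assoc, hh2,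
        ht'1]
    · rw [Category.assoc, hπ₂'2, hh'b₂, ht'2]
  have hPBh' : IsPB a₁ h' h b₁ := by
    refine hW'.cancel (by rw [hh'b₁]) ?_
    have e1 : h ≫ π₁ ≫ f = s ≫ f := by rw [← Category.assoc, hh1]
    rw [hh'b₂, e1]
    exact hPP
  have hFh' : S.Fib h' := hS.fib_pb hFh hPBh'
  have hPBs' : IsPB a₁ s' s p₁ := by
    refine hpb.cancel (by rw [hs'1]) ?_
    rw [hs'2]
    exact hPP
  obtain ⟨hFs', hEs'⟩ := hS.triv_fib_pb s p₁ a₁ s' hFs hEs hPBs'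
  have hEr' : S.Eqv r' :=
    hS.eqv_cancel_right hEs' (by rw [hr's']; exact hS.eqv_id P)
  exact ⟨PP, W', a₁, a₂, r', s', t', b₁, b₂, π₁', π₂', h',
    ⟨hEr', hr's', hr't', by rw [hs'2, ht'2], W', π₁', π₂', h', hPBW', hh'1, hh'2,
      hFh'⟩, hPBW', hh'1, hh'2, hFh', hPBh', hs'1, hs'2, ht'1, ht'2, hPP⟩

/-! ### Statement (1): stability of fibrations of n-types under pullback -/

theorem isNTypeFib_fib {n : ℕ} {Y X : C} {f : Y ⟶ X} (h : IsNTypeFib S n f) :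
    S.Fib f := by
  cases n with
  | zero => exact h.1
  | succ n => exact h.1

theorem IsPathCategory.ntype_pb (hS : IsPathCategory S) :
    ∀ (n : ℕ) {Y X P Z : C} {f : Y ⟶ X} {m : Z ⟶ X} {p₁ : P ⟶ Y} {p₂ : P ⟶ Z},
      IsNTypeFib S n f → IsPB p₁ p₂ f m → IsNTypeFib S n p₂ := by
  intro n
  induction n with
  | zero =>
    intro Y X P Z f m p₁ p₂ hf hpb
    exact ⟨hS.fib_pb hf.1 hpb, (hS.triv_fib_pb f m p₁ p₂ hf.1 hf.2 hpb).2⟩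
  | succ n ih =>
    intro Y X P Z f m p₁ p₂ hf hpb
    obtain ⟨hFf, PY, W, r, s, t, π₁, π₂, h, hrpo, hW, hh1, hh2, hn⟩ := hf
    obtain ⟨PP, W', a₁, a₂, r', s', t', b₁, b₂, π₁', π₂', h', hrpo', hPBW', hh'1,
      hh'2, hFh', hPBh', -, -, -, -, -⟩ :=
      hS.pbRelPathObj hFf hpb hrpo hW hh1 hh2 (isNTypeFib_fib hn)
    exact ⟨hS.fib_pb hFf hpb, PP, W', r', s', t', π₁', π₂', h', hrpo', hPBW',
      hh'1, hh'2, ih hn hPBh'⟩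

/-! ### Homotopies of maps into a pullback -/

theorem IsPathCategory.pair_homotopic (hS : IsPathCategory S) {V F E A B : C}
    {fq : E ⟶ B} (hfq : S.Fib fq) {uA : A ⟶ B} {pE : F ⟶ E} {pA : F ⟶ A}
    (hFpb : IsPB pE pA fq uA) {m₁ m₂ : V ⟶ F} (heq : m₁ ≫ pA = m₂ ≫ pA)
    (hfh : FibHomotopic S fq (m₁ ≫ pE) (m₂ ≫ pE)) : Homotopic S m₁ m₂ := by
  obtain ⟨Q, rq, sq, tq, hrpo, K, hKs, hKt⟩ := hfh
  have hrpo' := hrpo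
  obtain ⟨hEr, hrs, hrt, hst, W, w₁, w₂, hq, hWpb, hq1, hq2, hFhq⟩ := hrpo
  obtain ⟨PP, W', a₁, a₂, r', s', t', b₁, b₂, π₁', π₂', h', hrpo'', hPBW', hh'1,
    hh'2, hFh', hPBh', hs'1, hs'2, ht'1, ht'2, hPP⟩ :=
    hS.pbRelPathObj hfq hFpb hrpo' hWpb hq1 hq2 hFhq
  obtain ⟨Hh, ⟨hHh1, hHh2⟩, -⟩ := hPP.2 V K (m₁ ≫ pA)
    (by rw [← Category.assoc, hKs, Category.assoc, Category.assoc, hFpb.1])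
  have hHs : Hh ≫ s' = m₁ := by
    refine hFpb.hom_ext ?_ ?_
    · rw [Category.assoc, hs'1, ← Category.assoc, hHh1, hKs]
    · rw [Category.assoc, hs'2, hHh2]
  have hHt : Hh ≫ t' = m₂ := by
    refine hFpb.hom_ext ?_ ?_
    · rw [Category.assoc, ht'1, ← Category.assoc, hHh1, hKt]
    · rw [Category.assoc, ht'2, hHh2, heq]
  exact FibHomotopic.toHomotopic hS ⟨PP, r', s', t', hrpo'', Hh, hHs, hHt⟩

/-! ### Right properness -/

theorem IsPathCategory.rp_section (hS : IsPathCategory S) {A M T Sb : C}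
    {ι : A ⟶ M} {ρ : M ⟶ A} (hιρ : ι ≫ ρ = 𝟙 A) (hFρ : S.Fib ρ) (hEρ : S.Eqv ρ)
    {q : T ⟶ M} (hFq : S.Fib q) {σA : Sb ⟶ A} {σT : Sb ⟶ T}
    (hpb : IsPB σA σT ι q) : S.Eqv σT := by
  have hEι : S.Eqv ι :=
    hS.eqv_cancel_right hEρ (by rw [hιρ]; exact hS.eqv_id A)
  -- a relative path object for ρ
  obtain ⟨PAM, W', r', s', t', w₁, w₂, h', hrpo', hW', hh'1, hh'2, hFh'⟩ :=
    hS.relPathObj hFρ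
  obtain ⟨hFs', hFt', hEs', hEt'⟩ := hrpo'.props hS hFρ
  -- the fibrewise contraction K₀, with control over ι
  obtain ⟨v₀, ⟨hv₀1, hv₀2⟩, -⟩ := hW'.2 M (𝟙 M) (ρ ≫ ι)
    (by rw [Category.id_comp, Category.assoc, hιρ, Category.comp_id])
  obtain ⟨K₀, hK₀, hK₀fh⟩ := hS.lift_fh (w := ι) (p := h') (u := ι ≫ r') (v := v₀)
    hEι hFh' (by
      refine hW'.hom_ext ?_ ?_
      · rw [Category.assoc, Category.assoc, hh'1, hrpo'.2.1, Category.comp_id,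
          Category.assoc, hv₀1, Category.comp_id]
      · rw [Category.assoc, Category.assoc, hh'2, hrpo'.2.2.1, Category.comp_id,
          Category.assoc, hv₀2, ← Category.assoc, hιρ, Category.id_comp])
  have hK₀s : K₀ ≫ s' = 𝟙 M := by
    rw [← hh'1, ← Category.assoc, hK₀, hv₀1]
  have hK₀t : K₀ ≫ t' = ρ ≫ ι := by
    rw [← hh'2, ← Category.assoc, hK₀, hv₀2]
  -- the mapping cylinder-type object Q₂
  obtain ⟨Q₂, π2, ε₂, hQ₂, -⟩ := hS.pullback s' q hFs'
  obtain ⟨hFε₂, hEε₂⟩ := hS.triv_fib_pb s' q π2 ε₂ hFs' hEs' hQ₂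
  obtain ⟨ι₂, ⟨hι₂1, hι₂2⟩, -⟩ := hQ₂.2 T (q ≫ r') (𝟙 T)
    (by rw [Category.assoc, hrpo'.2.1, Category.comp_id, Category.id_comp])
  have hEι₂ : S.Eqv ι₂ :=
    hS.eqv_cancel_right hEε₂ (by rw [hι₂2]; exact hS.eqv_id T)
  have hFπ2 : S.Fib π2 := hS.fib_pb hFq hQ₂.symm
  have hFv₁ : S.Fib (π2 ≫ t') := hS.fib_comp _ _ hFπ2 hFt'
  -- the transported map Γ
  obtain ⟨Γ, hΓ, hΓfh⟩ := hS.lift_fh (w := ι₂) (p := q) (u := 𝟙 T) (v := π2 ≫ t')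
    hEι₂ hFq (by
      rw [Category.id_comp, ← Category.assoc, hι₂1, Category.assoc, hrpo'.2.2.1,
        Category.comp_id])
  -- the two comparison maps x and y
  obtain ⟨x, ⟨hx1, hx2⟩, -⟩ := hQ₂.2 Sb (σA ≫ ι ≫ K₀) σT
    (by
      simp only [Category.assoc, hK₀s, Category.comp_id]
      exact hpb.1)
  obtain ⟨y, ⟨hy1, hy2⟩, -⟩ := hQ₂.2 Sb (σA ≫ ι ≫ r') σT
    (by
      simp only [Category.assoc, hrpo'.2.1, Category.comp_id]
      exact hpb.1)
  have hyι₂ : y = σT ≫ ι₂ := by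
    refine hQ₂.hom_ext ?_ ?_
    · rw [hy1, Category.assoc, hι₂1, ← Category.assoc, ← Category.assoc, hpb.1]
    · rw [hy2, Category.assoc, hι₂2, Category.comp_id]
  -- x and y are fibrewise homotopic over π2 ≫ t'
  obtain ⟨Ph, rh, sh, th, hrpoh, W₀, hW₀s, hW₀t⟩ := hK₀fh
  obtain ⟨hFsh, hFth, hEsh, hEth⟩ := hrpoh.props hS hFh'
  have hsth : sh ≫ h' = th ≫ h' := hrpoh.2.2.2.1
  have hths' : th ≫ s' = sh ≫ s' := by
    rw [← hh'1, ← Category.assoc, ← hsth, Category.assoc, hh'1]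
  have hstt' : sh ≫ t' = th ≫ t' := by
    rw [← hh'2, ← Category.assoc, hsth, Category.assoc, hh'2]
  obtain ⟨Pt, pPh, pT, hPt, -⟩ :=
    hS.pullback (sh ≫ s') q (hS.fib_comp _ _ hFsh hFs')
  obtain ⟨sh2, ⟨hsh21, hsh22⟩, -⟩ := hQ₂.2 Pt (pPh ≫ sh) pT
    (by rw [Category.assoc]; exact hPt.1)
  obtain ⟨th2, ⟨hth21, hth22⟩, -⟩ := hQ₂.2 Pt (pPh ≫ th) pT
    (by rw [Category.assoc, hths']; exact hPt.1)
  obtain ⟨rh2, ⟨hrh21, hrh22⟩, -⟩ := hPt.2 Q₂ (π2 ≫ rh) ε₂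
    (by simp only [Category.assoc, reassoc_of% hrpoh.2.1, hQ₂.1])
  have hrs2 : rh2 ≫ sh2 = 𝟙 Q₂ := by
    refine hQ₂.hom_ext ?_ ?_
    · rw [Category.assoc, hsh21, ← Category.assoc, hrh21, Category.assoc,
        hrpoh.2.1, Category.comp_id, Category.id_comp]
    · rw [Category.assoc, hsh22, hrh22, Category.id_comp]
  have hrt2 : rh2 ≫ th2 = 𝟙 Q₂ := by
    refine hQ₂.hom_ext ?_ ?_
    · rw [Category.assoc, hth21, ← Category.assoc, hrh21, Category.assoc,
        hrpoh.2.2.1, Category.comp_id, Category.id_comp]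
    · rw [Category.assoc, hth22, hrh22, Category.id_comp]
  have hPBsh2 : IsPB pPh sh2 sh π2 := by
    refine hQ₂.cancel (by rw [hsh21]) ?_
    rw [hsh22]
    exact hPt
  obtain ⟨hFsh2, hEsh2⟩ := hS.triv_fib_pb sh π2 pPh sh2 hFsh hEsh hPBsh2
  have hErh2 : S.Eqv rh2 :=
    hS.eqv_cancel_right hEsh2 (by rw [hrs2]; exact hS.eqv_id Q₂)
  obtain ⟨Qv, Wv, rv, sv, tv, vw₁, vw₂, hv, hrpov, hWv, hhv1, hhv2, hFhv⟩ :=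
    hS.relPathObj hFv₁
  have hsv : sh2 ≫ π2 ≫ t' = th2 ≫ π2 ≫ t' := by
    rw [← Category.assoc, hsh21, ← Category.assoc, hth21, Category.assoc,
      Category.assoc, hstt']
  obtain ⟨vmap, ⟨hvm1, hvm2⟩, -⟩ := hWv.2 Pt sh2 th2 hsv
  obtain ⟨j, hj⟩ := hS.lift₀ (w := rh2) (p := hv) (u := rv) (v := vmap) hErh2 hFhv
    (by
      refine hWv.hom_ext ?_ ?_
      · rw [Category.assoc, hhv1, hrpov.2.1, Category.assoc, hvm1, hrs2]
      · rw [Category.assoc, hhv2, hrpov.2.2.1, Category.assoc, hvm2, hrt2])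
  obtain ⟨κ, ⟨hκ1, hκ2⟩, -⟩ := hPt.2 Sb (σA ≫ W₀) σT
    (by
      rw [Category.assoc, ← Category.assoc W₀, hW₀s]
      simp only [Category.assoc, hK₀s, Category.comp_id]
      exact hpb.1)
  have hκs : κ ≫ sh2 = x := by
    refine hQ₂.hom_ext ?_ ?_
    · rw [Category.assoc, hsh21, ← Category.assoc, hκ1, hx1, Category.assoc, hW₀s]
    · rw [Category.assoc, hsh22, hκ2, hx2]
  have hκt : κ ≫ th2 = y := by
    refine hQ₂.hom_ext ?_ ?_
    · rw [Category.assoc, hth21, ← Category.assoc, hκ1, hy1, Category.assoc, hW₀t]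
    · rw [Category.assoc, hth22, hκ2, hy2]
  have FH1 : FibHomotopic S (π2 ≫ t') x y := by
    refine ⟨Qv, rv, sv, tv, hrpov, κ ≫ j, ?_, ?_⟩
    · rw [← hhv1, Category.assoc, ← Category.assoc j, hj, hvm1, hκs]
    · rw [← hhv2, Category.assoc, ← Category.assoc j, hj, hvm2, hκt]
  -- push the homotopy into T via Γ
  have FH2 : FibHomotopic S q (x ≫ Γ) (y ≫ Γ) :=
    FH1.comp_over hS hFq (vm := 𝟙 M) (by rw [Category.comp_id]; exact hΓ)
  -- the candidate inverse η
  obtain ⟨b₀, ⟨hb₀1, hb₀2⟩, -⟩ := hQ₂.2 T (q ≫ K₀) (𝟙 T)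
    (by rw [Category.assoc, hK₀s, Category.comp_id, Category.id_comp])
  have hxb₀ : x = σT ≫ b₀ := by
    refine hQ₂.hom_ext ?_ ?_
    · rw [hx1, Category.assoc, hb₀1, ← Category.assoc, ← Category.assoc, hpb.1]
    · rw [hx2, Category.assoc, hb₀2, Category.comp_id]
  have hβq : (b₀ ≫ Γ) ≫ q = q ≫ ρ ≫ ι := by
    rw [Category.assoc, hΓ, ← Category.assoc, hb₀1, Category.assoc, hK₀t]
  obtain ⟨η, ⟨hη1, hη2⟩, -⟩ := hpb.2 T (q ≫ ρ) (b₀ ≫ Γ)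
    (by rw [hβq, Category.assoc])
  have hEβ : S.Eqv (b₀ ≫ Γ) := by
    have hEΓcomp : S.Eqv (ι₂ ≫ Γ) := by
      refine hS.eqv_of_homotopic (FibHomotopic.toHomotopic hS hΓfh).symm
        (hS.eqv_id T)
    have hEΓ : S.Eqv Γ := hS.eqv_cancel_left hEι₂ hEΓcomp
    have hEb₀ : S.Eqv b₀ :=
      hS.eqv_cancel_right hEε₂ (by rw [hb₀2]; exact hS.eqv_id T)
    exact hS.eqv_comp hEb₀ hEΓ
  -- σT ≫ η is homotopic to the identity
  have FH3 : FibHomotopic S q (σT ≫ ι₂ ≫ Γ) σT := by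
    have := hΓfh.precomp σT
    rwa [Category.comp_id] at this
  have FH4 : FibHomotopic S q (σT ≫ b₀ ≫ Γ) σT := by
    have h2 := FH2
    rw [hxb₀, hyι₂] at h2
    simp only [Category.assoc] at h2
    exact h2.trans hS hFq FH3
  have hhom : Homotopic S (σT ≫ η) (𝟙 Sb) := by
    refine hS.pair_homotopic hFq hpb.symm (pA := σA) (pE := σT) ?_ ?_
    · rw [Category.assoc, hη1, ← Category.assoc, ← hpb.1, Category.assoc, hιρ,
        Category.comp_id, Category.id_comp]
    · rw [Category.assoc, hη2, Category.id_comp]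
      simpa only [Category.assoc] using FH4
  have hEcomp1 : S.Eqv (σT ≫ η) :=
    hS.eqv_of_homotopic hhom.symm (hS.eqv_id Sb)
  have hEcomp2 : S.Eqv (η ≫ σT) := by rw [hη2]; exact hEβ
  exact (hS.two_out_of_six σT η σT hEcomp1 hEcomp2).1

theorem IsPathCategory.rp (hS : IsPathCategory S) {A B T F : C} {e : A ⟶ B}
    (he : S.Eqv e) {q : T ⟶ B} (hFq : S.Fib q) {σA : F ⟶ A} {σT : F ⟶ T}
    (hpb : IsPB σA σT e q) : S.Eqv σT := by
  obtain ⟨M, ι, ρ, qf, hιρ, hFρ, hEρ, hEι, hFqf, hιqf⟩ := hS.factor e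
  have hEqf : S.Eqv qf := hS.eqv_cancel_left hEι (by rwa [hιqf])
  obtain ⟨F', m₁, m₂, hF', -⟩ := hS.pullback qf q hFqf
  obtain ⟨hFm₂, hEm₂⟩ := hS.triv_fib_pb qf q m₁ m₂ hFqf hEqf hF'
  have hFm₁ : S.Fib m₁ := hS.fib_pb hFq hF'.symm
  obtain ⟨it, ⟨hit1, hit2⟩, -⟩ := hF'.2 F (σA ≫ ι) σT
    (by rw [Category.assoc, hιqf, hpb.1])
  have hsq : IsPB σA it ι m₁ := by
    refine hF'.cancel (by rw [hit1]) ?_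
    rw [hit2, hιqf]
    exact hpb
  have hEit : S.Eqv it := hS.rp_section hιρ hFρ hEρ hFm₁ hsq
  rw [← hit2]
  exact hS.eqv_comp hEit hEm₂

/-! ### Invariance of n-type fibrations under equivalences over the base -/

theorem IsPathCategory.core (hS : IsPathCategory S) :
    ∀ (n : ℕ) {D P X : C} {e : D ⟶ P} {p : P ⟶ X}, S.Eqv e → S.Fib p →
      S.Fib (e ≫ p) → IsNTypeFib S n p → IsNTypeFib S n (e ≫ p) := by
  intro n
  induction n with
  | zero =>
    intro D P X e p he hp hg hnp
    exact ⟨hg, hS.eqv_comp he hnp.2⟩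
  | succ n ih =>
    intro D P X e p he hp hg hnp
    obtain ⟨hFp, Qp, Wp, rp, sp, tp, π₁, π₂, hq, hrpop, hWp, hq1, hq2, hnq⟩ := hnp
    have hFhq : S.Fib hq := isNTypeFib_fib hnq
    obtain ⟨hFsp, hFtp, hEsp, hEtp⟩ := hrpop.props hS hFp
    obtain ⟨Mg, Wg, rg, sg, tg, c₁, c₂, hg', hrpog, hWg, hg1, hg2, hFhg⟩ :=
      hS.relPathObj hg
    obtain ⟨hFsg, hFtg, hEsg, hEtg⟩ := hrpog.props hS hg
    -- the induced map on fibred products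
    obtain ⟨et, ⟨het1, het2⟩, -⟩ := hWp.2 Wg (c₁ ≫ e) (c₂ ≫ e)
      (by simpa only [Category.assoc] using hWg.1)
    -- et is an equivalence, by right properness twice
    obtain ⟨V, u₁, u₂, hV, -⟩ := hS.pullback p (e ≫ p) hFp
    have hFu₁ : S.Fib u₁ := hS.fib_pb hg hV.symm
    obtain ⟨e1, ⟨he11, he12⟩, -⟩ := hV.2 Wg (c₁ ≫ e) c₂
      (by simpa only [Category.assoc] using hWg.1)
    have hPBe1 : IsPB c₁ e1 e u₁ := by
      refine hV.cancel (by rw [he11]) ?_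
      rw [he12]
      exact hWg
    have hEe1 : S.Eqv e1 := hS.rp he hFu₁ hPBe1
    have hFπ₂ : S.Fib π₂ := hS.fib_pb hFp hWp
    obtain ⟨oe, ⟨hoe1, hoe2⟩, -⟩ := hWp.2 V u₁ (u₂ ≫ e)
      (by simpa only [Category.assoc] using hV.1)
    have hPBoe : IsPB u₂ oe e π₂ := by
      refine hWp.symm.cancel (by rw [hoe2]) ?_
      rw [hoe1]
      exact hV.symm
    have hEoe : S.Eqv oe := hS.rp he hFπ₂ hPBoe
    have heq : e1 ≫ oe = et := by
      refine hWp.hom_ext ?_ ?_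
      · rw [Category.assoc, hoe1, he11, het1]
      · rw [Category.assoc, hoe2, ← Category.assoc, he12, het2]
    have hEet : S.Eqv et := by rw [← heq]; exact hS.eqv_comp hEe1 hEoe
    -- pull back the path object fibration of p along et
    obtain ⟨P₁, ρω, h₁, hP₁, hFh₁⟩ := hS.pullback hq et hFhq
    obtain ⟨l, hl⟩ := hS.lift₀ (w := rg) (p := hq) (u := e ≫ rp) (v := hg' ≫ et)
      hrpog.1 hFhq (by
        refine hWp.hom_ext ?_ ?_
        · simp only [Category.assoc, hq1, het1, hrpop.2.1, Category.comp_id,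
            reassoc_of% hg1, reassoc_of% hrpog.2.1]
        · simp only [Category.assoc, hq2, het2, hrpop.2.2.1, Category.comp_id,
            reassoc_of% hg2, reassoc_of% hrpog.2.2.1])
    obtain ⟨k, ⟨hk1, hk2⟩, -⟩ := hP₁.2 Mg l hg' hl
    -- k is an equivalence
    have hEρω : S.Eqv ρω := hS.rp hEet hFhq hP₁.symm
    have hEa₁ : S.Eqv (h₁ ≫ c₁) := by
      have e2 : ρω ≫ sp = (h₁ ≫ c₁) ≫ e := by
        rw [← hq1, ← Category.assoc, hP₁.1]
        simp only [Category.assoc, het1]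
      refine hS.eqv_cancel_right he ?_
      rw [← e2]
      exact hS.eqv_comp hEρω hEsp
    have hEk : S.Eqv k := by
      refine hS.eqv_cancel_right hEa₁ ?_
      rw [← Category.assoc, hk2, hg1]
      exact hEsg
    -- conclude by the inductive hypothesis
    have hnh₁ : IsNTypeFib S n h₁ := hS.ntype_pb n hnq hP₁
    have hnhg : IsNTypeFib S n hg' := by
      have := ih hEk hFh₁ (by rw [hk2]; exact hFhg) hnh₁
      rwa [hk2] at this
    exact ⟨hg, Mg, Wg, rg, sg, tg, c₁, c₂, hg', hrpog, hWg, hg1, hg2, hnhg⟩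

/-! ### The homotopy-invariance statements -/

theorem IsPathCategory.stmt3 (hS : IsPathCategory S) (n : ℕ) {Y X Z : C}
    {f : Y ⟶ X} (hf : IsNTypeFib S n f) {w : Z ⟶ Y} {g : Z ⟶ X}
    (hw : S.Eqv w) (hFg : S.Fib g) (hh : Homotopic S (w ≫ f) g) :
    IsNTypeFib S n g := by
  obtain ⟨PX, r, s, t, hpo, H, h1, h2⟩ := hh
  obtain ⟨L, hLf, hLh⟩ := hS.transport (isNTypeFib_fib hf) hpo h1
  have hLg : L ≫ f = g := by rw [hLf, h2]
  have hEL : S.Eqv L := hS.eqv_of_homotopic hLh.symm hw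
  have := hS.core n hEL (isNTypeFib_fib hf) (by rwa [hLg]) hf
  rwa [hLg] at this

theorem IsPathCategory.stmt2 (hS : IsPathCategory S) (n : ℕ) {Y X Z : C}
    {f : Y ⟶ X} (hf : IsNTypeFib S n f) {w : Y ⟶ Z} {g : Z ⟶ X}
    (hw : S.Eqv w) (hFg : S.Fib g) (hh : Homotopic S f (w ≫ g)) :
    IsNTypeFib S n g := by
  obtain ⟨w', hww', hw'w, hEw'⟩ := hS.hinv hw
  have h1 : Homotopic S (w' ≫ f) (w' ≫ w ≫ g) := hh.precomp w'
  have h2 : Homotopic S (w' ≫ w ≫ g) g := by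
    have := hw'w.postcomp hS g
    simpa only [Category.assoc, Category.id_comp] using this
  exact hS.stmt3 n hf hEw' hFg (h1.trans hS h2)

theorem IsPathCategory.stmt5 (hS : IsPathCategory S) (n : ℕ) {Y X Z : C}
    {f : Y ⟶ X} (hf : IsNTypeFib S n f) {w : X ⟶ Z} {g : Y ⟶ Z}
    (hw : S.Eqv w) (hFg : S.Fib g) (hh : Homotopic S (f ≫ w) g) :
    IsNTypeFib S n g := by
  have hFf : S.Fib f := isNTypeFib_fib hf
  obtain ⟨w', hww', hw'w, hEw'⟩ := hS.hinv hw
  have hA : Homotopic S f (g ≫ w') := by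
    have a1 : Homotopic S f (f ≫ w ≫ w') := by
      have := (hww'.precomp f).symm
      simpa only [Category.assoc, Category.comp_id] using this
    have a2 : Homotopic S (f ≫ w ≫ w') (g ≫ w') := by
      have := hh.postcomp hS w'
      simpa only [Category.assoc] using this
    exact a1.trans hS a2
  obtain ⟨PX, r, s, t, hpo, H, hH1, hH2⟩ := hA
  obtain ⟨L, hL, hLh⟩ := hS.transport (L₀ := 𝟙 Y) hFf hpo
    (by rw [hH1, Category.id_comp])
  have hEL : S.Eqv L := hS.eqv_of_homotopic hLh.symm (hS.eqv_id Y)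
  obtain ⟨F, aY, aZ, hFpb, hFaZ⟩ := hS.pullback f w' hFf
  have hnaZ : IsNTypeFib S n aZ := hS.ntype_pb n hf hFpb
  have hEaY : S.Eqv aY := hS.rp hEw' hFf hFpb.symm
  obtain ⟨ξ, ⟨hξ1, hξ2⟩, -⟩ := hFpb.2 Y L g (by rw [hL, hH2])
  have hEξ : S.Eqv ξ := hS.eqv_cancel_right hEaY (by rwa [hξ1])
  have := hS.core n hEξ hFaZ (by rwa [hξ2]) hnaZ
  rwa [hξ2] at this

theorem IsPathCategory.stmt4 (hS : IsPathCategory S) (n : ℕ) {Y X Z : C}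
    {f : Y ⟶ X} (hf : IsNTypeFib S n f) {g : Y ⟶ Z} {w : Z ⟶ X}
    (hw : S.Eqv w) (hFg : S.Fib g) (hh : Homotopic S f (g ≫ w)) :
    IsNTypeFib S n g := by
  obtain ⟨w', hww', hw'w, hEw'⟩ := hS.hinv hw
  have b1 : Homotopic S (f ≫ w') (g ≫ w ≫ w') := by
    have := hh.postcomp hS w'
    simpa only [Category.assoc] using this
  have b2 : Homotopic S (g ≫ w ≫ w') g := by
    have := hww'.precomp g
    simpa only [Category.assoc, Category.comp_id] using this
  exact hS.stmt5 n hf hEw' hFg (b1.trans hS b2)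



/-- In a path category, let `f : Y ⟶ X` be a fibration of
`(n-2)`-types.  Then: (1) any fibration obtained by pulling back `f` along some map
is again one; (2) if `w` is an equivalence and `g` a fibration with `f ≃ g ∘ w` or
`f ∘ w ≃ g`, then `g` is one; (3) if `w` is an equivalence and `g` a fibration with
`f ≃ w ∘ g` or `w ∘ f ≃ g`, then `g` is one. -/
theorem ntype_fibrations_invariance {C : Type u} [Category.{v} C]
    (S : PathStruct C) (hS : IsPathCategory S)
    (n : ℕ) {Y X : C} (f : Y ⟶ X) (hf : IsNTypeFib S n f) :
    (∀ {P Z : C} (m : Z ⟶ X) (p₁ : P ⟶ Y) (p₂ : P ⟶ Z),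
      IsPB p₁ p₂ f m → IsNTypeFib S n p₂) ∧
    (∀ {Z : C} (w : Y ⟶ Z) (g : Z ⟶ X), S.Eqv w → S.Fib g →
      Homotopic S f (w ≫ g) → IsNTypeFib S n g) ∧
    (∀ {Z : C} (w : Z ⟶ Y) (g : Z ⟶ X), S.Eqv w → S.Fib g →
      Homotopic S (w ≫ f) g → IsNTypeFib S n g) ∧
    (∀ {Z : C} (g : Y ⟶ Z) (w : Z ⟶ X), S.Eqv w → S.Fib g →
      Homotopic S f (g ≫ w) → IsNTypeFib S n g) ∧
    (∀ {Z : C} (w : X ⟶ Z) (g : Y ⟶ Z), S.Eqv w → S.Fib g →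
      Homotopic S (f ≫ w) g → IsNTypeFib S n g) := by
  refine ⟨fun m p₁ p₂ hpb => hS.ntype_pb n hf hpb,
    fun w g hw hg hh => hS.stmt2 n hf hw hg hh,
    fun w g hw hg hh => hS.stmt3 n hf hw hg hh,
    fun g w hw hg hh => hS.stmt4 n hf hw hg hh,
    fun w g hw hg hh => hS.stmt5 n hf hw hg hh⟩

end EffPaper
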